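/- arXiv:0803.1283 — 2 statements merged into one kernel-verified Lean document; each statement's English description precedes it below -/
import Mathlib

section
/- Under the assumptions of the subsequence construction (F ∈ 𝓕^X_{M,a}, t > 0, separable closed subspaces Φ ⊂ X, Ψ ⊂ X*, subsequence (g_k) such that T_s(g, φ) := lim_{k→∞} (F(t/g_k)^{[g_k s/t]} g, φ) exists for all g ∈ Φ, φ ∈ Ψ, s ≥ 0): if f ∈ D(closure of F'(0)) ∩ Φ and (closure of F'(0))f ∈ Φ, then d/ds T_s(f, φ) = T_s((closure of F'(0))f, φ) for all s ≥ 0 and φ ∈ Ψ. -/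
open Filter Topology MeasureTheory

noncomputable section

variable {X : Type*} [NormedAddCommGroup X] [NormedSpace ℝ X] [CompleteSpace X]

/-- `y` is the value of the strong derivative at `0` of `F : [0,∞) → L(X)` at `ψ`. -/
def DerivAtZero (F : ℝ → (X →L[ℝ] X)) (ψ y : X) : Prop :=
  Tendsto (fun h : ℝ => h⁻¹ • (F h ψ - F 0 ψ)) (𝓝[>] (0 : ℝ)) (𝓝 y)

/-- The class `𝓕^X_{M,a}`. -/
def MemFClass (F : ℝ → (X →L[ℝ] X)) (M a : ℝ) : Prop :=
  F 0 = 1 ∧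
    (∀ n m : ℕ, 0 < n → 0 < m → ∀ s : ℝ, 0 ≤ s →
      ‖(F (s / n)) ^ m‖ ≤ M * Real.exp (a * m * s / n)) ∧
    Dense {ψ : X | ∃ y, DerivAtZero F ψ y}

/-- The class `𝓕_X`. -/
def MemF (F : ℝ → (X →L[ℝ] X)) : Prop := ∃ M, 1 ≤ M ∧ ∃ a : ℝ, MemFClass F M a

/-- The adjoint of a bounded operator, acting on the dual space. -/
noncomputable def adjCLM (T : X →L[ℝ] X) :
    StrongDual ℝ X →L[ℝ] StrongDual ℝ X :=
  LinearMap.mkContinuous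
    { toFun := fun φ => φ.comp T
      map_add' := fun φ ψ => by ext x; simp
      map_smul' := fun c φ => by ext x; simp }
    ‖T‖ (fun φ => by simpa [mul_comm] using φ.opNorm_comp_le T)

/-- `ψ` is the value at `φ` of the strong derivative at `0` of `s ↦ F(s)*`. -/
def AdjDerivAtZero (F : ℝ → (X →L[ℝ] X)) (φ ψ : StrongDual ℝ X) : Prop :=
  Tendsto (fun h : ℝ => h⁻¹ • (adjCLM (F h) φ - adjCLM (F 0) φ)) (𝓝[>] (0 : ℝ)) (𝓝 ψ)

/-- A `C₀`-semigroup on `X` (as a function on `[0,∞)`, modelled on all of `ℝ`). -/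
def IsC0Semigroup (S : ℝ → (X →L[ℝ] X)) : Prop :=
  S 0 = 1 ∧ (∀ a b : ℝ, 0 ≤ a → 0 ≤ b → S (a + b) = S a * S b) ∧
    (∀ x : X, ContinuousOn (fun s => S s x) (Set.Ici (0 : ℝ))) ∧
    ∃ M, 1 ≤ M ∧ ∃ w : ℝ, ∀ s : ℝ, 0 ≤ s → ‖S s‖ ≤ M * Real.exp (w * s)

/-- `Z` is the generator of the semigroup `S`: the strong derivative of `S` at `0`,
with its maximal domain, coincides with `Z`. -/
def IsGeneratorOf (S : ℝ → (X →L[ℝ] X)) (Z : X →ₗ.[ℝ] X) : Prop :=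
  ∀ x y : X, DerivAtZero S x y ↔ ∃ hx : x ∈ Z.domain, Z ⟨x, hx⟩ = y

/-- Every subsequence of `u` has a weakly convergent subsubsequence. -/
def WeakSubCvg (u : ℕ → X) : Prop :=
  ∀ k : ℕ → ℕ, StrictMono k → ∃ j : ℕ → ℕ, StrictMono j ∧ ∃ L : X,
    ∀ φ : StrongDual ℝ X, Tendsto (fun i => φ (u (k (j i)))) atTop (𝓝 (φ L))

/-- `(f, y)` belongs to the closure of the graph of `F'(0)`. -/
def InClosureGraphF (F : ℝ → (X →L[ℝ] X)) (f y : X) : Prop :=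
  (f, y) ∈ closure {p : X × X | DerivAtZero F p.1 p.2}


set_option linter.unusedSectionVars false
set_option linter.unusedVariables false
set_option maxHeartbeats 2000000

namespace ChernoffAux

variable {F : ℝ → (X →L[ℝ] X)} {M a t : ℝ} {gk : ℕ → ℕ}

lemma pow_norm_le (hM : 1 ≤ M) (hF : MemFClass F M a) (ht : 0 < t)
    {n : ℕ} (hn : 0 < n) {m : ℕ} {r : ℝ} (hr : 0 ≤ r)
    (hmr : (m : ℝ) * (t / n) ≤ r) :
    ‖(F (t / n)) ^ m‖ ≤ M * Real.exp (|a| * r) := by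
  have hexp1 : (1:ℝ) ≤ Real.exp (|a| * r) := Real.one_le_exp (by positivity)
  rcases Nat.eq_zero_or_pos m with hm | hm
  · subst hm
    rw [pow_zero, ContinuousLinearMap.one_def]
    calc ‖ContinuousLinearMap.id ℝ X‖ ≤ 1 := ContinuousLinearMap.norm_id_le
      _ ≤ M * Real.exp (|a| * r) := by nlinarith
  · refine (hF.2.1 n m hn hm t ht.le).trans ?_
    have hmn : (0:ℝ) ≤ (m:ℝ) * (t / n) := by positivity
    have hre : a * m * t / n = a * ((m:ℝ) * (t / n)) := by ring
    have hexp : a * m * t / n ≤ |a| * r := by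
      rw [hre]
      calc a * ((m:ℝ) * (t/n)) ≤ |a| * ((m:ℝ) * (t/n)) :=
            mul_le_mul_of_nonneg_right (le_abs_self a) hmn
        _ ≤ |a| * r := mul_le_mul_of_nonneg_left hmr (abs_nonneg a)
    exact mul_le_mul_of_nonneg_left (Real.exp_le_exp.2 hexp) (le_trans zero_le_one hM)

lemma apply_bound (hM : 1 ≤ M) (hF : MemFClass F M a) (ht : 0 < t)
    {n : ℕ} (hn : 0 < n) (φ : StrongDual ℝ X) (z : X) {m : ℕ} {S : ℝ} (hS : 0 ≤ S)
    (hmS : (m : ℝ) * (t / n) ≤ S) :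
    |φ (((F (t / n)) ^ m) z)| ≤ ‖φ‖ * (M * Real.exp (|a| * S)) * ‖z‖ := by
  calc |φ (((F (t / n)) ^ m) z)| ≤ ‖φ‖ * ‖((F (t / n)) ^ m) z‖ := φ.le_opNorm _
    _ ≤ ‖φ‖ * (‖(F (t / n)) ^ m‖ * ‖z‖) :=
        mul_le_mul_of_nonneg_left ((F (t/n) ^ m).le_opNorm z) (norm_nonneg φ)
    _ ≤ ‖φ‖ * ((M * Real.exp (|a| * S)) * ‖z‖) := by
        have := pow_norm_le hM hF ht hn hS hmS (m := m)
        gcongr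
    _ = ‖φ‖ * (M * Real.exp (|a| * S)) * ‖z‖ := by ring

lemma telescope (G : X →L[ℝ] X) (x : X) {m1 m2 : ℕ} (h : m1 ≤ m2) :
    (G ^ m2) x - (G ^ m1) x = ∑ j ∈ Finset.Ico m1 m2, (G ^ j) (G x - x) := by
  have key : ∀ j, (G ^ j) (G x - x) = (G ^ (j+1)) x - (G ^ j) x := by
    intro j
    rw [map_sub, pow_succ, ContinuousLinearMap.mul_apply]
  calc (G ^ m2) x - (G ^ m1) x
      = ((G ^ m2) x - (G ^ 0) x) - ((G ^ m1) x - (G ^ 0) x) := by abel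
    _ = (∑ j ∈ Finset.range m2, ((G ^ (j+1)) x - (G ^ j) x))
        - ∑ j ∈ Finset.range m1, ((G ^ (j+1)) x - (G ^ j) x) := by
        rw [Finset.sum_range_sub (fun j => (G ^ j) x), Finset.sum_range_sub (fun j => (G ^ j) x)]
    _ = ∑ j ∈ Finset.Ico m1 m2, ((G ^ (j+1)) x - (G ^ j) x) :=
        (Finset.sum_Ico_eq_sub _ h).symm
    _ = ∑ j ∈ Finset.Ico m1 m2, (G ^ j) (G x - x) := by simp [key]

lemma deriv_quant (hF0 : F 0 = (1 : X →L[ℝ] X)) {ψ y' : X} (h : DerivAtZero F ψ y')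
    {ε : ℝ} (hε : 0 < ε) :
    ∃ δ > 0, ∀ u : ℝ, 0 < u → u ≤ δ → ‖F u ψ - ψ - u • y'‖ ≤ ε * u := by
  have h2 : ∀ᶠ u in 𝓝[>] (0:ℝ), ‖u⁻¹ • (F u ψ - F 0 ψ) - y'‖ < ε := by
    have := Metric.tendsto_nhds.mp h ε hε
    simpa [dist_eq_norm] using this
  rcases mem_nhdsGT_iff_exists_Ioc_subset.mp h2 with ⟨δ, hδ, hsub⟩
  refine ⟨δ, hδ, fun u hu huδ => ?_⟩
  have hmem := hsub ⟨hu, huδ⟩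
  have hne : u ≠ 0 := ne_of_gt hu
  have heq : F u ψ - ψ - u • y' = u • (u⁻¹ • (F u ψ - F 0 ψ) - y') := by
    rw [smul_sub, smul_inv_smul₀ hne, hF0]
    simp
  rw [heq, norm_smul, Real.norm_eq_abs, abs_of_pos hu]
  exact mul_le_mul_of_nonneg_left (le_of_lt hmem) hu.le |>.trans (le_of_eq (mul_comm u ε))


lemma floor_mul_le (ht : 0 < t) {n : ℕ} (hn : 0 < n) {r : ℝ} (hr : 0 ≤ r) :
    (⌊(n:ℝ) * (r/t)⌋₊ : ℝ) * (t/n) ≤ r := by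
  have hn' : (0:ℝ) < n := Nat.cast_pos.2 hn
  have h1 : (⌊(n:ℝ) * (r/t)⌋₊ : ℝ) ≤ (n:ℝ) * (r/t) := Nat.floor_le (by positivity)
  calc (⌊(n:ℝ) * (r/t)⌋₊ : ℝ) * (t/n) ≤ ((n:ℝ) * (r/t)) * (t/n) :=
        mul_le_mul_of_nonneg_right h1 (by positivity)
    _ = r := by field_simp

lemma lt_floor_succ (ht : 0 < t) {n : ℕ} (hn : 0 < n) (r : ℝ) :
    r < ((⌊(n:ℝ) * (r/t)⌋₊ : ℝ) + 1) * (t/n) := by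
  have hn' : (0:ℝ) < n := Nat.cast_pos.2 hn
  have h1 : (n:ℝ) * (r/t) < (⌊(n:ℝ) * (r/t)⌋₊ : ℝ) + 1 := Nat.lt_floor_add_one _
  calc r = ((n:ℝ) * (r/t)) * (t/n) := by field_simp
    _ < ((⌊(n:ℝ) * (r/t)⌋₊ : ℝ) + 1) * (t/n) := mul_lt_mul_of_pos_right h1 (by positivity)

lemma floor_mono' (ht : 0 < t) (n : ℕ) {r1 r2 : ℝ} (h0 : 0 ≤ r1) (h : r1 ≤ r2) :
    ⌊(n:ℝ) * (r1/t)⌋₊ ≤ ⌊(n:ℝ) * (r2/t)⌋₊ := by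
  apply Nat.floor_le_floor
  have : r1 / t ≤ r2 / t := by gcongr
  exact mul_le_mul_of_nonneg_left this (by positivity)

lemma sum_bound (hM : 1 ≤ M) (hF : MemFClass F M a) (ht : 0 < t)
    {n : ℕ} (hn : 0 < n) (φ : StrongDual ℝ X) (z : X) {m1 m2 : ℕ} (hm : m1 ≤ m2)
    {S : ℝ} (hS : 0 ≤ S) (hm2 : (m2:ℝ) * (t/n) ≤ S) :
    |∑ j ∈ Finset.Ico m1 m2, φ (((F (t/n)) ^ j) z)|
      ≤ ((m2:ℝ) - m1) * (‖φ‖ * (M * Real.exp (|a| * S)) * ‖z‖) := by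
  have each : ∀ j ∈ Finset.Ico m1 m2,
      |φ (((F (t/n)) ^ j) z)| ≤ ‖φ‖ * (M * Real.exp (|a| * S)) * ‖z‖ := by
    intro j hj
    have hjm : (j:ℝ) ≤ (m2:ℝ) := by exact_mod_cast (Finset.mem_Ico.mp hj).2.le
    have hj2 : (j:ℝ) * (t/n) ≤ S := by
      refine le_trans ?_ hm2
      have : (0:ℝ) ≤ t/n := by positivity
      exact mul_le_mul_of_nonneg_right hjm this
    exact apply_bound hM hF ht hn φ z hS hj2
  calc |∑ j ∈ Finset.Ico m1 m2, φ (((F (t/n)) ^ j) z)|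
      ≤ ∑ j ∈ Finset.Ico m1 m2, |φ (((F (t/n)) ^ j) z)| := Finset.abs_sum_le_sum_abs _ _
    _ ≤ ∑ _j ∈ Finset.Ico m1 m2, ‖φ‖ * (M * Real.exp (|a| * S)) * ‖z‖ :=
        Finset.sum_le_sum each
    _ = ((m2:ℝ) - m1) * (‖φ‖ * (M * Real.exp (|a| * S)) * ‖z‖) := by
        rw [Finset.sum_const, nsmul_eq_mul, Nat.card_Ico, Nat.cast_sub hm]

lemma gk_tendsto (hgk : StrictMono gk) : Tendsto (fun k => (gk k : ℝ)) atTop atTop :=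
  tendsto_natCast_atTop_atTop.comp hgk.tendsto_atTop

lemma h_tendsto (ht : 0 < t) (hgk : StrictMono gk) :
    Tendsto (fun k => t / (gk k : ℝ)) atTop (𝓝 0) :=
  Tendsto.div_atTop tendsto_const_nhds (gk_tendsto hgk)

lemma ev_pos (hgk : StrictMono gk) : ∀ᶠ k in atTop, 0 < gk k := by
  filter_upwards [eventually_ge_atTop 1] with k hk
  exact lt_of_lt_of_le hk hgk.le_apply

lemma ev_h_le (ht : 0 < t) (hgk : StrictMono gk) {η : ℝ} (hη : 0 < η) :
    ∀ᶠ k in atTop, t / (gk k : ℝ) ≤ η := by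
  have := (h_tendsto ht hgk).eventually (eventually_le_nhds hη)
  simpa using this


/-- key difference estimate -/
lemma T_diff_le (hM : 1 ≤ M) (hF : MemFClass F M a) (ht : 0 < t) (hgk : StrictMono gk)
    (T : ℝ → X → StrongDual ℝ X → ℝ) (φ : StrongDual ℝ X) (g : X)
    (hTg : ∀ s : ℝ, 0 ≤ s → Tendsto
      (fun k : ℕ => φ (((F (t / (gk k))) ^ ⌊(gk k : ℝ) * (s / t)⌋₊) g)) atTop (𝓝 (T s g φ)))
    {r1 r2 : ℝ} (h0 : 0 ≤ r1) (h12 : r1 ≤ r2) {S : ℝ} (hS : r2 ≤ S)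
    {ψ y' : X} (hder : DerivAtZero F ψ y') {η : ℝ} (hη : 0 < η) :
    |T r2 g φ - T r1 g φ| ≤ 2 * (‖φ‖ * (M * Real.exp (|a| * S))) * ‖g - ψ‖
      + (‖φ‖ * (M * Real.exp (|a| * S))) * (‖y'‖ + 1) * (r2 - r1 + η) := by
  set C := ‖φ‖ * (M * Real.exp (|a| * S)) with hCdef
  have hC : 0 ≤ C := by positivity
  have hS0 : 0 ≤ S := le_trans (le_trans h0 h12) hS
  obtain ⟨δ0, hδ0, hquant⟩ := deriv_quant hF.1 hder (ε := 1) one_pos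
  have hD : Tendsto (fun k : ℕ => φ (((F (t / (gk k))) ^ ⌊(gk k : ℝ) * (r2 / t)⌋₊) g)
      - φ (((F (t / (gk k))) ^ ⌊(gk k : ℝ) * (r1 / t)⌋₊) g)) atTop
      (𝓝 (T r2 g φ - T r1 g φ)) := (hTg r2 (le_trans h0 h12)).sub (hTg r1 h0)
  have habs : Tendsto (fun k : ℕ => |φ (((F (t / (gk k))) ^ ⌊(gk k : ℝ) * (r2 / t)⌋₊) g)
      - φ (((F (t / (gk k))) ^ ⌊(gk k : ℝ) * (r1 / t)⌋₊) g)|) atTop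
      (𝓝 |T r2 g φ - T r1 g φ|) := hD.abs
  refine le_of_tendsto habs ?_
  filter_upwards [ev_pos hgk, ev_h_le ht hgk hδ0, ev_h_le ht hgk hη] with k hk1 hk2 hk3
  set n := gk k with hndef
  have hn' : (0:ℝ) < n := Nat.cast_pos.2 hk1
  set u := t / (n:ℝ) with hudef
  have hu : 0 < u := by positivity
  set m1 := ⌊(n:ℝ) * (r1 / t)⌋₊ with hm1def
  set m2 := ⌊(n:ℝ) * (r2 / t)⌋₊ with hm2def
  have hm12 : m1 ≤ m2 := floor_mono' ht n h0 h12
  have hm1S : (m1:ℝ) * u ≤ S := le_trans (le_trans (floor_mul_le ht hk1 h0) h12) hS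
  have hm2S : (m2:ℝ) * u ≤ S := le_trans (le_trans (floor_mul_le ht hk1 (le_trans h0 h12)) hS) le_rfl
  -- decomposition
  have hdec : φ (((F u) ^ m2) g) - φ (((F u) ^ m1) g)
      = (φ (((F u) ^ m2) (g - ψ)) - φ (((F u) ^ m1) (g - ψ)))
        + ∑ j ∈ Finset.Ico m1 m2, φ (((F u) ^ j) (F u ψ - ψ)) := by
    have ht' : ((F u) ^ m2) ψ - ((F u) ^ m1) ψ
        = ∑ j ∈ Finset.Ico m1 m2, ((F u) ^ j) (F u ψ - ψ) := telescope (F u) ψ hm12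
    have : φ (((F u) ^ m2) ψ) - φ (((F u) ^ m1) ψ)
        = ∑ j ∈ Finset.Ico m1 m2, φ (((F u) ^ j) (F u ψ - ψ)) := by
      rw [← map_sum, ← ht', map_sub]
    rw [← this]
    simp only [map_sub]
    ring
  have hb1 : |φ (((F u) ^ m2) (g - ψ))| ≤ C * ‖g - ψ‖ :=
    apply_bound hM hF ht hk1 φ (g - ψ) hS0 hm2S
  have hb2 : |φ (((F u) ^ m1) (g - ψ))| ≤ C * ‖g - ψ‖ :=
    apply_bound hM hF ht hk1 φ (g - ψ) hS0 hm1S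
  have hFψ : ‖F u ψ - ψ‖ ≤ u * (‖y'‖ + 1) := by
    have h1 : ‖F u ψ - ψ - u • y'‖ ≤ 1 * u := hquant u hu hk2
    have h2 : ‖F u ψ - ψ‖ ≤ ‖F u ψ - ψ - u • y'‖ + ‖u • y'‖ := by
      have := norm_add_le (F u ψ - ψ - u • y') (u • y')
      simpa using this
    have h3 : ‖u • y'‖ = u * ‖y'‖ := by
      rw [norm_smul, Real.norm_eq_abs, abs_of_pos hu]
    nlinarith
  have hb3 : |∑ j ∈ Finset.Ico m1 m2, φ (((F u) ^ j) (F u ψ - ψ))|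
      ≤ ((m2:ℝ) - m1) * (C * ‖F u ψ - ψ‖) :=
    sum_bound hM hF ht hk1 φ (F u ψ - ψ) hm12 hS0 hm2S
  have hlen : ((m2:ℝ) - (m1:ℝ)) * u ≤ r2 - r1 + η := by
    have l1 : (m2:ℝ) * u ≤ r2 := floor_mul_le ht hk1 (le_trans h0 h12)
    have l2 : r1 < ((m1:ℝ) + 1) * u := lt_floor_succ ht hk1 r1
    nlinarith
  have hm2m1 : (0:ℝ) ≤ (m2:ℝ) - m1 := by
    have : (m1:ℝ) ≤ m2 := Nat.cast_le.2 hm12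
    linarith
  have hnFψ : 0 ≤ ‖F u ψ - ψ‖ := norm_nonneg _
  have hy1 : (0:ℝ) < ‖y'‖ + 1 := by positivity
  have hb3' : |∑ j ∈ Finset.Ico m1 m2, φ (((F u) ^ j) (F u ψ - ψ))|
      ≤ C * (‖y'‖ + 1) * (r2 - r1 + η) := by
    refine hb3.trans ?_
    have step1 : ((m2:ℝ) - m1) * (C * ‖F u ψ - ψ‖) ≤ ((m2:ℝ) - m1) * (C * (u * (‖y'‖ + 1))) := by
      gcongr
    refine step1.trans ?_
    have : ((m2:ℝ) - m1) * (C * (u * (‖y'‖ + 1))) = C * (‖y'‖ + 1) * (((m2:ℝ) - m1) * u) := by ring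
    rw [this]
    gcongr
  calc |φ (((F u) ^ m2) g) - φ (((F u) ^ m1) g)|
      ≤ |φ (((F u) ^ m2) (g - ψ)) - φ (((F u) ^ m1) (g - ψ))|
        + |∑ j ∈ Finset.Ico m1 m2, φ (((F u) ^ j) (F u ψ - ψ))| := by
        rw [hdec]; exact abs_add_le _ _
    _ ≤ (|φ (((F u) ^ m2) (g - ψ))| + |φ (((F u) ^ m1) (g - ψ))|)
        + |∑ j ∈ Finset.Ico m1 m2, φ (((F u) ^ j) (F u ψ - ψ))| := by
        gcongr; exact abs_sub _ _
    _ ≤ (C * ‖g - ψ‖ + C * ‖g - ψ‖) + C * (‖y'‖ + 1) * (r2 - r1 + η) := by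
        gcongr
    _ = 2 * C * ‖g - ψ‖ + C * (‖y'‖ + 1) * (r2 - r1 + η) := by ring


lemma T_contOn (hM : 1 ≤ M) (hF : MemFClass F M a) (ht : 0 < t) (hgk : StrictMono gk)
    (T : ℝ → X → StrongDual ℝ X → ℝ) (φ : StrongDual ℝ X) (g : X)
    (hTg : ∀ s : ℝ, 0 ≤ s → Tendsto
      (fun k : ℕ => φ (((F (t / (gk k))) ^ ⌊(gk k : ℝ) * (s / t)⌋₊) g)) atTop (𝓝 (T s g φ))) :
    ContinuousOn (fun r => T r g φ) (Set.Ici (0:ℝ)) := by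
  intro s hs
  have hs0 : (0:ℝ) ≤ s := hs
  rw [Metric.continuousWithinAt_iff]
  intro ε hε
  set C := ‖φ‖ * (M * Real.exp (|a| * (s+1))) with hCdef
  have hC : 0 ≤ C := by positivity
  set ε' := ε / (8 * (C + 1)) with hε'def
  have hε' : 0 < ε' := by positivity
  obtain ⟨ψ, hψS, hψd⟩ := Metric.mem_closure_iff.mp (hF.2.2 g) ε' hε'
  obtain ⟨y', hder⟩ := hψS
  have hgψ : ‖g - ψ‖ ≤ ε' := by
    rw [dist_eq_norm] at hψd; exact hψd.le
  set δ := min 1 (ε / (4 * (C * (‖y'‖ + 1) + 1))) with hδdef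
  have hδpos : 0 < δ := by
    apply lt_min one_pos
    positivity
  refine ⟨δ, hδpos, fun {r} hr hrs => ?_⟩
  have hr0 : (0:ℝ) ≤ r := hr
  -- main bound for sorted pair
  have main : ∀ r1 r2 : ℝ, 0 ≤ r1 → r1 ≤ r2 → r2 ≤ s + 1 → r2 - r1 < δ →
      |T r2 g φ - T r1 g φ| < ε := by
    intro r1 r2 h0 h12 hle hlt
    have hη : 0 < δ - (r2 - r1) := by linarith
    have := T_diff_le hM hF ht hgk T φ g hTg h0 h12 hle hder hη
    have hsum : r2 - r1 + (δ - (r2 - r1)) = δ := by ring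
    rw [hsum] at this
    have b1 : 2 * C * ‖g - ψ‖ ≤ 2 * C * ε' := by gcongr
    have b1' : 2 * C * ε' ≤ ε / 4 := by
      have key : ε' * (8 * (C + 1)) = ε := by
        rw [hε'def]; field_simp
      nlinarith [hε'.le, hC]
    have b2 : C * (‖y'‖ + 1) * δ ≤ ε / 4 := by
      have hδ2 : δ ≤ ε / (4 * (C * (‖y'‖ + 1) + 1)) := min_le_right _ _
      have hCy : 0 ≤ C * (‖y'‖ + 1) := by positivity
      have : C * (‖y'‖ + 1) * δ ≤ C * (‖y'‖ + 1) * (ε / (4 * (C * (‖y'‖ + 1) + 1))) := by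
        gcongr
      refine this.trans ?_
      set q := ε / (4 * (C * (‖y'‖ + 1) + 1)) with hqdef
      have hq : 0 ≤ q := by positivity
      have key : q * (4 * (C * (‖y'‖ + 1) + 1)) = ε := by
        rw [hqdef]; field_simp
      nlinarith [hCy, hq]
    calc |T r2 g φ - T r1 g φ| ≤ 2 * C * ‖g - ψ‖ + C * (‖y'‖ + 1) * δ := this
      _ ≤ ε / 4 + ε / 4 := add_le_add (b1.trans b1') b2
      _ < ε := by linarith
  have hδ1 : δ ≤ 1 := min_le_left _ _
  rw [Real.dist_eq]
  rcases le_total r s with hc | hc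
  · have : |T s g φ - T r g φ| < ε := by
      apply main r s hr0 hc (by linarith) ?_
      rw [Real.dist_eq] at hrs
      rw [abs_of_nonpos (by linarith)] at hrs
      linarith
    rw [abs_sub_comm] at this
    exact this
  · rw [Real.dist_eq, abs_of_nonneg (by linarith)] at hrs
    exact main s r hs0 hc (by linarith) (by linarith)


lemma intervalIntegrable_of_bdd {f : ℝ → ℝ} (hf : Measurable f) {C A B : ℝ}
    (hC : ∀ x ∈ Set.uIoc A B, |f x| ≤ C) : IntervalIntegrable f volume A B := by
  rw [intervalIntegrable_iff]
  have hlt : volume (Set.uIoc A B) < ⊤ := by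
    rw [Set.uIoc]; exact measure_Ioc_lt_top
  refine Integrable.mono' (g := fun _ => C) (integrableOn_const hlt.ne)
    hf.aestronglyMeasurable.restrict ?_
  refine (ae_restrict_iff' measurableSet_uIoc).2 (ae_of_all _ ?_)
  intro x hx
  simpa [Real.norm_eq_abs] using hC x hx

/-- The integral identity. -/
lemma integral_identity (hM : 1 ≤ M) (hF : MemFClass F M a) (ht : 0 < t) (hgk : StrictMono gk)
    (T : ℝ → X → StrongDual ℝ X → ℝ) (φ : StrongDual ℝ X) (f y : X)
    (hTf : ∀ s : ℝ, 0 ≤ s → Tendsto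
      (fun k : ℕ => φ (((F (t / (gk k))) ^ ⌊(gk k : ℝ) * (s / t)⌋₊) f)) atTop (𝓝 (T s f φ)))
    (hTy : ∀ s : ℝ, 0 ≤ s → Tendsto
      (fun k : ℕ => φ (((F (t / (gk k))) ^ ⌊(gk k : ℝ) * (s / t)⌋₊) y)) atTop (𝓝 (T s y φ)))
    (hfy : (f, y) ∈ closure {p : X × X | DerivAtZero F p.1 p.2})
    {s1 s2 : ℝ} (h1 : 0 ≤ s1) (h12 : s1 ≤ s2) :
    T s2 f φ - T s1 f φ = ∫ r in s1..s2, T r y φ := by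
  have h2 : (0:ℝ) ≤ s2 := le_trans h1 h12
  -- notation
  set u : ℕ → ℝ := fun k => t / (gk k : ℝ) with hudef
  set mm : ℕ → ℝ → ℕ := fun k r => ⌊(gk k : ℝ) * (r / t)⌋₊ with hmmdef
  set V : ℕ → ℝ → ℝ := fun k r => φ (((F (u k)) ^ (mm k r)) y) with hVdef
  set Cy : ℝ := ‖φ‖ * (M * Real.exp (|a| * s2)) * ‖y‖ with hCydef
  have hCy : 0 ≤ Cy := by positivity
  set C2 : ℝ := ‖φ‖ * (M * Real.exp (|a| * s2)) with hC2def
  have hC2 : 0 ≤ C2 := by positivity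
  -- measurability
  have hVmeas : ∀ k, Measurable (V k) := by
    intro k
    have h1m : Measurable fun r : ℝ => (gk k : ℝ) * (r / t) :=
      (measurable_id.div_const t).const_mul _
    exact (measurable_of_countable (fun m : ℕ => φ (((F (u k)) ^ m) y))).comp
      (Nat.measurable_floor.comp h1m)
  -- pointwise bound
  have hVbdd : ∀ k, 0 < gk k → ∀ x : ℝ, 0 ≤ x → x ≤ s2 → |V k x| ≤ Cy := by
    intro k hk x hx hxs
    have hmS : ((mm k x : ℕ) : ℝ) * (t / (gk k : ℝ)) ≤ s2 :=
      (floor_mul_le ht hk hx).trans hxs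
    exact apply_bound hM hF ht hk φ y h2 hmS
  -- integrability on subintervals of [0, s2]
  have hVint : ∀ k, 0 < gk k → ∀ A B : ℝ, 0 ≤ A → A ≤ s2 → 0 ≤ B → B ≤ s2 →
      IntervalIntegrable (V k) volume A B := by
    intro k hk A B hA hAs hB hBs
    refine intervalIntegrable_of_bdd (hVmeas k) (C := Cy) ?_
    intro x hx
    rcases hx with ⟨hx1, hx2⟩
    have hx0 : 0 ≤ x := le_trans (le_min hA hB) hx1.le
    have hxs : x ≤ s2 := le_trans hx2 (max_le hAs hBs)
    exact hVbdd k hk x hx0 hxs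
  -- piece computation
  have hpiece : ∀ k, 0 < gk k → ∀ j : ℕ,
      ∫ r in ((j:ℝ) * u k)..(((j:ℝ) + 1) * u k), V k r = (u k) * φ (((F (u k)) ^ j) y) := by
    intro k hk j
    have hn' : (0:ℝ) < (gk k : ℝ) := Nat.cast_pos.2 hk
    have hu : 0 < u k := by simp only [hudef]; positivity
    have hle : (j:ℝ) * u k ≤ ((j:ℝ) + 1) * u k := by nlinarith
    rw [intervalIntegral.integral_of_le hle]
    have hcongr : ∫ r in Set.Ioc ((j:ℝ) * u k) (((j:ℝ) + 1) * u k), V k r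
        = ∫ _r in Set.Ioc ((j:ℝ) * u k) (((j:ℝ) + 1) * u k), φ (((F (u k)) ^ j) y) := by
      refine setIntegral_congr_ae measurableSet_Ioc ?_
      have hne : ∀ᵐ x : ℝ, x ≠ ((j:ℝ) + 1) * u k := by
        have h0 : volume ({((j:ℝ) + 1) * u k} : Set ℝ) = 0 := measure_singleton _
        filter_upwards [measure_eq_zero_iff_ae_notMem.mp h0] with x hx
        simpa using hx
      filter_upwards [hne] with x hx hmem
      obtain ⟨hx1, hx2⟩ := hmem
      have hx2' : x < ((j:ℝ) + 1) * u k := lt_of_le_of_ne hx2 hx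
      have hxpos : 0 < x := lt_of_le_of_lt (by positivity) hx1
      have hfl : ⌊(gk k : ℝ) * (x / t)⌋₊ = j := by
        rw [Nat.floor_eq_iff (by positivity)]
        constructor
        · have hju : (j:ℝ) * (t / (gk k : ℝ)) < x := hx1
          calc (j:ℝ) = ((j:ℝ) * (t / (gk k : ℝ))) * ((gk k : ℝ) / t) := by field_simp
            _ ≤ x * ((gk k : ℝ) / t) :=
                mul_le_mul_of_nonneg_right hju.le (by positivity)
            _ = (gk k : ℝ) * (x / t) := by ring
        · have hju : x < ((j:ℝ) + 1) * (t / (gk k : ℝ)) := hx2'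
          calc (gk k : ℝ) * (x / t) = x * ((gk k : ℝ) / t) := by ring
            _ < (((j:ℝ) + 1) * (t / (gk k : ℝ))) * ((gk k : ℝ) / t) :=
                mul_lt_mul_of_pos_right hju (by positivity)
            _ = (j:ℝ) + 1 := by field_simp
      show φ (((F (u k)) ^ (mm k x)) y) = φ (((F (u k)) ^ j) y)
      have : mm k x = j := hfl
      rw [this]
    rw [hcongr, setIntegral_const, measureReal_def, Real.volume_Ioc]
    have harg : ((j:ℝ) + 1) * u k - (j:ℝ) * u k = u k := by ring
    rw [harg, ENNReal.toReal_ofReal hu.le, smul_eq_mul]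
  -- sum over pieces
  have hsum : ∀ k, 0 < gk k →
      (∑ j ∈ Finset.Ico (mm k s1) (mm k s2), (u k) * φ (((F (u k)) ^ j) y))
        = ∫ r in (((mm k s1 : ℕ):ℝ) * u k)..(((mm k s2 : ℕ):ℝ) * u k), V k r := by
    intro k hk
    have hm12 : mm k s1 ≤ mm k s2 := floor_mono' ht (gk k) h1 h12
    have hm2s2 : ((mm k s2 : ℕ):ℝ) * u k ≤ s2 := floor_mul_le ht hk h2
    have hu : 0 < u k := by
      have hn' : (0:ℝ) < (gk k : ℝ) := Nat.cast_pos.2 hk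
      simp only [hudef]; positivity
    have key := intervalIntegral.sum_integral_adjacent_intervals_Ico (μ := volume)
      (f := V k) (a := fun j => (j:ℝ) * u k) hm12 ?hint
    case hint =>
      intro j hj
      have hjm : (j:ℕ) < mm k s2 := hj.2
      have hA : (0:ℝ) ≤ (j:ℝ) * u k := by positivity
      have hB : (0:ℝ) ≤ ((j:ℝ) + 1) * u k := by positivity
      have hAs : (j:ℝ) * u k ≤ s2 := by
        refine le_trans ?_ hm2s2
        have : (j:ℝ) ≤ ((mm k s2 : ℕ):ℝ) := by exact_mod_cast hjm.le
        exact mul_le_mul_of_nonneg_right this hu.le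
      have hBs : ((j:ℝ) + 1) * u k ≤ s2 := by
        refine le_trans ?_ hm2s2
        have : ((j:ℝ) + 1) ≤ ((mm k s2 : ℕ):ℝ) := by exact_mod_cast hjm
        exact mul_le_mul_of_nonneg_right this hu.le
      have := hVint k hk ((j:ℝ) * u k) (((j:ℝ) + 1) * u k) hA hAs hB hBs
      simpa [push_cast] using this
    rw [← key]
    refine Finset.sum_congr rfl ?_
    intro j hj
    have := hpiece k hk j
    rw [← this]
    norm_num [push_cast]
  -- A_k converges
  have hTf2 : Tendsto (fun k => φ (((F (u k)) ^ (mm k s2)) f)) atTop (𝓝 (T s2 f φ)) := hTf s2 h2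
  have hTf1 : Tendsto (fun k => φ (((F (u k)) ^ (mm k s1)) f)) atTop (𝓝 (T s1 f φ)) := hTf s1 h1
  have hA : Tendsto (fun k => φ (((F (u k)) ^ (mm k s2)) f) - φ (((F (u k)) ^ (mm k s1)) f))
      atTop (𝓝 (T s2 f φ - T s1 f φ)) := hTf2.sub hTf1
  set SB : ℕ → ℝ := fun k => ∑ j ∈ Finset.Ico (mm k s1) (mm k s2), (u k) * φ (((F (u k)) ^ j) y)
    with hSBdef
  set Ik : ℕ → ℝ := fun k => ∫ r in s1..s2, V k r with hIkdef
  have hupos : ∀ k, 0 < gk k → 0 < u k := by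
    intro k hk
    have hn' : (0:ℝ) < (gk k : ℝ) := Nat.cast_pos.2 hk
    show (0:ℝ) < t / (gk k : ℝ)
    positivity
  -- (6a)
  have h6a : Tendsto (fun k => SB k - Ik k) atTop (𝓝 0) := by
    have hgten : Tendsto (fun k => Cy * u k + Cy * u k) atTop (𝓝 0) := by
      have h0 := h_tendsto ht hgk
      have h0' : Tendsto (fun k => Cy * u k + Cy * u k) atTop (𝓝 (Cy * 0 + Cy * 0)) :=
        (h0.const_mul Cy).add (h0.const_mul Cy)
      simpa using h0'
    refine squeeze_zero_norm' ?_ hgten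
    filter_upwards [ev_pos hgk] with k hk
    have hu : 0 < u k := hupos k hk
    have hm1le : ((mm k s1 : ℕ):ℝ) * u k ≤ s1 := floor_mul_le ht hk h1
    have hm2le : ((mm k s2 : ℕ):ℝ) * u k ≤ s2 := floor_mul_le ht hk h2
    have hm10 : (0:ℝ) ≤ ((mm k s1 : ℕ):ℝ) * u k := by positivity
    have hm20 : (0:ℝ) ≤ ((mm k s2 : ℕ):ℝ) * u k := by positivity
    have i1 : IntervalIntegrable (V k) volume (((mm k s1 : ℕ):ℝ) * u k) s1 :=
      hVint k hk _ _ hm10 (le_trans hm1le h12) h1 h12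
    have i2 : IntervalIntegrable (V k) volume s1 s2 := hVint k hk _ _ h1 h12 h2 le_rfl
    have i3 : IntervalIntegrable (V k) volume s2 (((mm k s2 : ℕ):ℝ) * u k) :=
      hVint k hk _ _ h2 le_rfl hm20 hm2le
    have e1 := intervalIntegral.integral_add_adjacent_intervals i1 i2
    have e2 := intervalIntegral.integral_add_adjacent_intervals (i1.trans i2) i3
    have hSBk : SB k = ∫ r in (((mm k s1 : ℕ):ℝ) * u k)..(((mm k s2 : ℕ):ℝ) * u k), V k r :=
      hsum k hk
    have hsplit : SB k - Ik k = (∫ r in (((mm k s1 : ℕ):ℝ) * u k)..s1, V k r)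
        + (∫ r in s2..(((mm k s2 : ℕ):ℝ) * u k), V k r) := by
      rw [hSBk]
      show (∫ r in (((mm k s1 : ℕ):ℝ) * u k)..(((mm k s2 : ℕ):ℝ) * u k), V k r)
        - (∫ r in s1..s2, V k r) = _
      linarith [e1, e2]
    rw [hsplit]
    have n1 : ‖∫ r in (((mm k s1 : ℕ):ℝ) * u k)..s1, V k r‖ ≤ Cy * u k := by
      have hb : ∀ x ∈ Set.uIoc (((mm k s1 : ℕ):ℝ) * u k) s1, ‖V k x‖ ≤ Cy := by
        intro x hx
        rw [Set.uIoc_of_le hm1le] at hx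
        have hx0 : 0 ≤ x := le_trans hm10 hx.1.le
        rw [Real.norm_eq_abs]
        exact hVbdd k hk x hx0 (le_trans hx.2 h12)
      refine (intervalIntegral.norm_integral_le_of_norm_le_const hb).trans ?_
      have habs : |s1 - ((mm k s1 : ℕ):ℝ) * u k| ≤ u k := by
        rw [abs_of_nonneg (by linarith)]
        have := lt_floor_succ ht hk s1
        show s1 - ((mm k s1 : ℕ):ℝ) * u k ≤ u k
        have h' : s1 < (((mm k s1 : ℕ):ℝ) + 1) * (t / (gk k : ℝ)) := this
        have hue : u k = t / (gk k : ℝ) := rfl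
        nlinarith [h']
      calc Cy * |s1 - ((mm k s1 : ℕ):ℝ) * u k| ≤ Cy * u k := by gcongr
        _ = Cy * u k := rfl
    have n2 : ‖∫ r in s2..(((mm k s2 : ℕ):ℝ) * u k), V k r‖ ≤ Cy * u k := by
      have hb : ∀ x ∈ Set.uIoc s2 (((mm k s2 : ℕ):ℝ) * u k), ‖V k x‖ ≤ Cy := by
        intro x hx
        rw [Set.uIoc_comm, Set.uIoc_of_le hm2le] at hx
        have hx0 : 0 ≤ x := le_trans hm20 hx.1.le
        rw [Real.norm_eq_abs]
        exact hVbdd k hk x hx0 hx.2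
      refine (intervalIntegral.norm_integral_le_of_norm_le_const hb).trans ?_
      have habs : |((mm k s2 : ℕ):ℝ) * u k - s2| ≤ u k := by
        rw [abs_of_nonpos (by linarith)]
        have h' : s2 < (((mm k s2 : ℕ):ℝ) + 1) * (t / (gk k : ℝ)) := lt_floor_succ ht hk s2
        have hue : u k = t / (gk k : ℝ) := rfl
        nlinarith [h']
      calc Cy * |((mm k s2 : ℕ):ℝ) * u k - s2| ≤ Cy * u k := by gcongr
        _ = Cy * u k := rfl
    calc ‖(∫ r in (((mm k s1 : ℕ):ℝ) * u k)..s1, V k r)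
          + (∫ r in s2..(((mm k s2 : ℕ):ℝ) * u k), V k r)‖
        ≤ ‖∫ r in (((mm k s1 : ℕ):ℝ) * u k)..s1, V k r‖
          + ‖∫ r in s2..(((mm k s2 : ℕ):ℝ) * u k), V k r‖ := norm_add_le _ _
      _ ≤ Cy * u k + Cy * u k := add_le_add n1 n2
  -- (6b)
  have h6b : Tendsto (fun k => (φ (((F (u k)) ^ (mm k s2)) f) - φ (((F (u k)) ^ (mm k s1)) f))
      - SB k) atTop (𝓝 0) := by
    rw [NormedAddCommGroup.tendsto_nhds_zero]
    intro η hη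
    set εa := η / (8 * (C2 + 1) * (s2 + 1)) with hεadef
    have hεa : 0 < εa := by positivity
    obtain ⟨p, hpS, hpd⟩ := Metric.mem_closure_iff.mp hfy εa hεa
    have hder : DerivAtZero F p.1 p.2 := hpS
    set ψ := p.1 with hψdef
    set y' := p.2 with hy'def
    have hfψ : ‖f - ψ‖ ≤ εa := by
      have h' : dist f ψ ≤ dist (f, y) p := by
        rw [Prod.dist_eq]; exact le_max_left _ _
      rw [dist_eq_norm] at h'
      exact h'.trans hpd.le
    have hyy' : ‖y' - y‖ ≤ εa := by
      have h' : dist y y' ≤ dist (f, y) p := by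
        rw [Prod.dist_eq]; exact le_max_right _ _
      rw [dist_eq_norm, norm_sub_rev] at h'
      exact h'.trans hpd.le
    obtain ⟨δ0, hδ0, hquant⟩ := deriv_quant hF.1 hder hεa
    have hkey : εa * (8 * (C2 + 1) * (s2 + 1)) = η := by
      rw [hεadef]; field_simp
    filter_upwards [ev_pos hgk, ev_h_le ht hgk hδ0] with k hk hk2
    have hu : 0 < u k := hupos k hk
    have hm12 : mm k s1 ≤ mm k s2 := floor_mono' ht (gk k) h1 h12
    have hm2S : ((mm k s2 : ℕ):ℝ) * u k ≤ s2 := floor_mul_le ht hk h2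
    have hm1S : ((mm k s1 : ℕ):ℝ) * u k ≤ s2 := le_trans (floor_mul_le ht hk h1) h12
    have hquant' : ‖F (u k) ψ - ψ - (u k) • y'‖ ≤ εa * u k := hquant (u k) hu hk2
    -- decomposition
    have e : ∀ j : ℕ, φ (((F (u k)) ^ j) (F (u k) ψ - ψ - (u k) • y'))
        + φ (((F (u k)) ^ j) ((u k) • (y' - y)))
        = φ (((F (u k)) ^ j) (F (u k) ψ - ψ)) - φ (((F (u k)) ^ j) ((u k) • y)) := by
      intro j
      rw [← map_add, ← map_add]
      have harg : (F (u k) ψ - ψ - (u k) • y') + (u k) • (y' - y)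
          = (F (u k) ψ - ψ) - (u k) • y := by
        rw [smul_sub]; abel
      rw [harg, map_sub ((F (u k)) ^ j), map_sub φ]
    have htel : φ (((F (u k)) ^ (mm k s2)) ψ) - φ (((F (u k)) ^ (mm k s1)) ψ)
        = ∑ j ∈ Finset.Ico (mm k s1) (mm k s2), φ (((F (u k)) ^ j) (F (u k) ψ - ψ)) := by
      rw [← map_sum, ← telescope (F (u k)) ψ hm12, map_sub]
    have hSBk : SB k = ∑ j ∈ Finset.Ico (mm k s1) (mm k s2), φ (((F (u k)) ^ j) ((u k) • y)) := by
      show (∑ j ∈ Finset.Ico (mm k s1) (mm k s2), (u k) * φ (((F (u k)) ^ j) y)) = _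
      refine Finset.sum_congr rfl fun j _ => ?_
      simp [smul_eq_mul]
    have hsum2 : (∑ j ∈ Finset.Ico (mm k s1) (mm k s2),
          φ (((F (u k)) ^ j) (F (u k) ψ - ψ - (u k) • y')))
        + (∑ j ∈ Finset.Ico (mm k s1) (mm k s2), φ (((F (u k)) ^ j) ((u k) • (y' - y))))
        = (∑ j ∈ Finset.Ico (mm k s1) (mm k s2), φ (((F (u k)) ^ j) (F (u k) ψ - ψ)))
          - ∑ j ∈ Finset.Ico (mm k s1) (mm k s2), φ (((F (u k)) ^ j) ((u k) • y)) := by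
      rw [← Finset.sum_add_distrib, ← Finset.sum_sub_distrib]
      exact Finset.sum_congr rfl fun j _ => e j
    have hdec : (φ (((F (u k)) ^ (mm k s2)) f) - φ (((F (u k)) ^ (mm k s1)) f)) - SB k
        = (φ (((F (u k)) ^ (mm k s2)) (f - ψ)) - φ (((F (u k)) ^ (mm k s1)) (f - ψ)))
        + ((∑ j ∈ Finset.Ico (mm k s1) (mm k s2),
            φ (((F (u k)) ^ j) (F (u k) ψ - ψ - (u k) • y')))
          + (∑ j ∈ Finset.Ico (mm k s1) (mm k s2), φ (((F (u k)) ^ j) ((u k) • (y' - y))))) := by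
      rw [hsum2, hSBk, ← htel]
      simp only [map_sub]
      ring
    -- bounds
    have b1 : |φ (((F (u k)) ^ (mm k s2)) (f - ψ))| ≤ C2 * εa := by
      have := apply_bound hM hF ht hk φ (f - ψ) h2 hm2S
      calc |φ (((F (u k)) ^ (mm k s2)) (f - ψ))| ≤ C2 * ‖f - ψ‖ := this
        _ ≤ C2 * εa := by gcongr
    have b2 : |φ (((F (u k)) ^ (mm k s1)) (f - ψ))| ≤ C2 * εa := by
      have := apply_bound hM hF ht hk φ (f - ψ) h2 hm1S
      calc |φ (((F (u k)) ^ (mm k s1)) (f - ψ))| ≤ C2 * ‖f - ψ‖ := this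
        _ ≤ C2 * εa := by gcongr
    have hlen : (((mm k s2 : ℕ):ℝ) - ((mm k s1 : ℕ):ℝ)) * u k ≤ s2 := by
      have hm1nn : (0:ℝ) ≤ ((mm k s1 : ℕ):ℝ) * u k := by positivity
      nlinarith [hm2S]
    have hmcast : (0:ℝ) ≤ ((mm k s2 : ℕ):ℝ) - ((mm k s1 : ℕ):ℝ) := by
      have : ((mm k s1 : ℕ):ℝ) ≤ ((mm k s2 : ℕ):ℝ) := Nat.cast_le.2 hm12
      linarith
    have b3 : |∑ j ∈ Finset.Ico (mm k s1) (mm k s2),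
        φ (((F (u k)) ^ j) (F (u k) ψ - ψ - (u k) • y'))| ≤ s2 * (C2 * εa) := by
      have hb := sum_bound hM hF ht hk φ (F (u k) ψ - ψ - (u k) • y') hm12 h2 hm2S
      refine hb.trans ?_
      calc (((mm k s2 : ℕ):ℝ) - ((mm k s1 : ℕ):ℝ)) * (C2 * ‖F (u k) ψ - ψ - (u k) • y'‖)
          ≤ (((mm k s2 : ℕ):ℝ) - ((mm k s1 : ℕ):ℝ)) * (C2 * (εa * u k)) := by gcongr
        _ = ((((mm k s2 : ℕ):ℝ) - ((mm k s1 : ℕ):ℝ)) * u k) * (C2 * εa) := by ring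
        _ ≤ s2 * (C2 * εa) := by
            have : (0:ℝ) ≤ C2 * εa := by positivity
            exact mul_le_mul_of_nonneg_right hlen this
    have b4 : |∑ j ∈ Finset.Ico (mm k s1) (mm k s2),
        φ (((F (u k)) ^ j) ((u k) • (y' - y)))| ≤ s2 * (C2 * εa) := by
      have hb := sum_bound hM hF ht hk φ ((u k) • (y' - y)) hm12 h2 hm2S
      refine hb.trans ?_
      have hns : ‖(u k) • (y' - y)‖ = u k * ‖y' - y‖ := by
        rw [norm_smul, Real.norm_eq_abs, abs_of_pos hu]
      calc (((mm k s2 : ℕ):ℝ) - ((mm k s1 : ℕ):ℝ)) * (C2 * ‖(u k) • (y' - y)‖)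
          = (((mm k s2 : ℕ):ℝ) - ((mm k s1 : ℕ):ℝ)) * (C2 * (u k * ‖y' - y‖)) := by rw [hns]
        _ ≤ (((mm k s2 : ℕ):ℝ) - ((mm k s1 : ℕ):ℝ)) * (C2 * (u k * εa)) := by gcongr
        _ = ((((mm k s2 : ℕ):ℝ) - ((mm k s1 : ℕ):ℝ)) * u k) * (C2 * εa) := by ring
        _ ≤ s2 * (C2 * εa) := by
            have : (0:ℝ) ≤ C2 * εa := by positivity
            exact mul_le_mul_of_nonneg_right hlen this
    -- combine
    rw [Real.norm_eq_abs, hdec]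
    calc |(φ (((F (u k)) ^ (mm k s2)) (f - ψ)) - φ (((F (u k)) ^ (mm k s1)) (f - ψ)))
        + ((∑ j ∈ Finset.Ico (mm k s1) (mm k s2),
            φ (((F (u k)) ^ j) (F (u k) ψ - ψ - (u k) • y')))
          + (∑ j ∈ Finset.Ico (mm k s1) (mm k s2), φ (((F (u k)) ^ j) ((u k) • (y' - y)))))|
        ≤ (|φ (((F (u k)) ^ (mm k s2)) (f - ψ))| + |φ (((F (u k)) ^ (mm k s1)) (f - ψ))|)
          + (|∑ j ∈ Finset.Ico (mm k s1) (mm k s2),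
              φ (((F (u k)) ^ j) (F (u k) ψ - ψ - (u k) • y'))|
            + |∑ j ∈ Finset.Ico (mm k s1) (mm k s2),
              φ (((F (u k)) ^ j) ((u k) • (y' - y)))|) := by
          refine (abs_add_le _ _).trans ?_
          gcongr
          · exact abs_sub _ _
          · exact abs_add_le _ _
      _ ≤ (C2 * εa + C2 * εa) + (s2 * (C2 * εa) + s2 * (C2 * εa)) := by
          gcongr
      _ < η := by nlinarith [hkey, hC2, h2, hεa, mul_nonneg hC2 hεa.le]
  -- (7) dominated convergence
  have hDCT : Tendsto Ik atTop (𝓝 (∫ r in s1..s2, T r y φ)) := by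
    apply intervalIntegral.tendsto_integral_filter_of_dominated_convergence (bound := fun _ => Cy)
    · exact Eventually.of_forall fun k => ((hVmeas k).aestronglyMeasurable).restrict
    · filter_upwards [ev_pos hgk] with k hk
      refine ae_of_all _ ?_
      intro x hx
      rw [Set.uIoc_of_le h12] at hx
      have hx0 : 0 ≤ x := le_trans h1 hx.1.le
      rw [Real.norm_eq_abs]
      exact hVbdd k hk x hx0 hx.2
    · exact intervalIntegrable_const
    · refine ae_of_all _ ?_
      intro x hx
      rw [Set.uIoc_of_le h12] at hx
      exact hTy x (le_trans h1 hx.1.le)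
  -- (8) combine
  have hcomb : Tendsto (fun k => φ (((F (u k)) ^ (mm k s2)) f) - φ (((F (u k)) ^ (mm k s1)) f))
      atTop (𝓝 (0 + 0 + ∫ r in s1..s2, T r y φ)) := by
    have hfe : (fun k => φ (((F (u k)) ^ (mm k s2)) f) - φ (((F (u k)) ^ (mm k s1)) f))
        = fun k => ((φ (((F (u k)) ^ (mm k s2)) f) - φ (((F (u k)) ^ (mm k s1)) f)) - SB k)
          + (SB k - Ik k) + Ik k := by
      funext k; ring
    rw [hfe]
    exact (h6b.add h6a).add hDCT
  have := tendsto_nhds_unique hA hcomb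
  simpa using this


end ChernoffAux

open ChernoffAux in
/-- Lemma 5: under the subsequence construction, if
`f ∈ D(closure of F'(0)) ∩ Φ` with `(closure of F'(0))f = y ∈ Φ`, then
`d/ds T_s(f, φ) = T_s(y, φ)` for all `s ≥ 0` and `φ ∈ Ψ`. -/
theorem chernoff_lemma5 (F : ℝ → (X →L[ℝ] X)) (M a : ℝ) (hM : 1 ≤ M)
    (hF : MemFClass F M a) (t : ℝ) (ht : 0 < t)
    (Φ : Submodule ℝ X) (hΦc : IsClosed (Φ : Set X))
    (hΦs : TopologicalSpace.IsSeparable (Φ : Set X))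
    (Ψ : Submodule ℝ (StrongDual ℝ X)) (hΨc : IsClosed (Ψ : Set (StrongDual ℝ X)))
    (hΨs : TopologicalSpace.IsSeparable (Ψ : Set (StrongDual ℝ X)))
    (gk : ℕ → ℕ) (hgk : StrictMono gk)
    (T : ℝ → X → StrongDual ℝ X → ℝ)
    (hT : ∀ s : ℝ, 0 ≤ s → ∀ g ∈ Φ, ∀ φ ∈ Ψ,
      Tendsto (fun k : ℕ => φ (((F (t / (gk k))) ^ ⌊(gk k : ℝ) * (s / t)⌋₊) g))
        atTop (𝓝 (T s g φ)))
    (f y : X) (hfy : InClosureGraphF F f y) (hfΦ : f ∈ Φ) (hyΦ : y ∈ Φ) :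
    ∀ s : ℝ, 0 ≤ s → ∀ φ ∈ Ψ,
      HasDerivWithinAt (fun r => T r f φ) (T s y φ) (Set.Ici (0 : ℝ)) s := by
  intro s hs φ hφ
  have hTy : ∀ s' : ℝ, 0 ≤ s' → Tendsto
      (fun k : ℕ => φ (((F (t / (gk k))) ^ ⌊(gk k : ℝ) * (s' / t)⌋₊) y)) atTop (𝓝 (T s' y φ)) :=
    fun s' hs' => hT s' hs' y hyΦ φ hφ
  have hTf : ∀ s' : ℝ, 0 ≤ s' → Tendsto
      (fun k : ℕ => φ (((F (t / (gk k))) ^ ⌊(gk k : ℝ) * (s' / t)⌋₊) f)) atTop (𝓝 (T s' f φ)) :=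
    fun s' hs' => hT s' hs' f hfΦ φ hφ
  have hvcont : ContinuousOn (fun r => T r y φ) (Set.Ici (0:ℝ)) :=
    T_contOn hM hF ht hgk T φ y hTy
  have hident : ∀ r1 r2 : ℝ, 0 ≤ r1 → r1 ≤ r2 →
      T r2 f φ - T r1 f φ = ∫ r in r1..r2, T r y φ :=
    fun r1 r2 h1 h12 => integral_identity hM hF ht hgk T φ f y hTf hTy hfy h1 h12
  have hint2 : ∀ r1 r2 : ℝ, 0 ≤ r1 → 0 ≤ r2 →
      T r2 f φ - T r1 f φ = ∫ r in r1..r2, T r y φ := by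
    intro r1 r2 h1 h2
    rcases le_total r1 r2 with h | h
    · exact hident r1 r2 h1 h
    · have hrev := hident r2 r1 h2 h
      have hsymm : (∫ r in r1..r2, T r y φ) = -∫ r in r2..r1, T r y φ :=
        intervalIntegral.integral_symm r2 r1
      linarith
  rw [hasDerivWithinAt_iff_tendsto_slope]
  rw [Metric.tendsto_nhdsWithin_nhds]
  intro ε hε
  have hcw : ContinuousWithinAt (fun r => T r y φ) (Set.Ici (0:ℝ)) s := hvcont s hs
  rw [Metric.continuousWithinAt_iff] at hcw
  obtain ⟨δ, hδ, hδprop⟩ := hcw (ε/2) (by positivity)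
  refine ⟨δ, hδ, ?_⟩
  intro r hr hrs
  obtain ⟨hr0', hrne⟩ := hr
  have hr0 : (0:ℝ) ≤ r := hr0'
  have hrne' : r ≠ s := by simpa using hrne
  have hne : r - s ≠ 0 := sub_ne_zero.mpr hrne'
  have hrsabs : |r - s| < δ := by rwa [Real.dist_eq] at hrs
  have hsub : Set.uIcc s r ⊆ Set.Ici (0:ℝ) := by
    intro x hx
    exact le_trans (le_min hs hr0) hx.1
  have hvint : IntervalIntegrable (fun r' => T r' y φ) volume s r :=
    (hvcont.mono hsub).intervalIntegrable
  have hdiff : T r f φ - T s f φ = ∫ r' in s..r, T r' y φ := hint2 s r hs hr0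
  have hslope : slope (fun r' => T r' f φ) s r = (r - s)⁻¹ * (T r f φ - T s f φ) := by
    simp [slope, vsub_eq_sub, smul_eq_mul]
  have key : (r - s)⁻¹ * (∫ r' in s..r, T r' y φ) - T s y φ
      = (r - s)⁻¹ * ∫ r' in s..r, (T r' y φ - T s y φ) := by
    rw [intervalIntegral.integral_sub hvint intervalIntegrable_const,
      intervalIntegral.integral_const, smul_eq_mul]
    field_simp
  have ibound : ‖∫ r' in s..r, (T r' y φ - T s y φ)‖ ≤ (ε/2) * |r - s| := by
    apply intervalIntegral.norm_integral_le_of_norm_le_const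
    intro x hx
    obtain ⟨hx1, hx2⟩ := hx
    have hx0 : (0:ℝ) ≤ x := le_trans (le_min hs hr0) hx1.le
    have hxd : dist x s < δ := by
      rw [Real.dist_eq]
      rcases le_total s r with hc | hc
      · have h1 : s ⊓ r = s := min_eq_left hc
        have h2 : s ⊔ r = r := max_eq_right hc
        rw [h1] at hx1; rw [h2] at hx2
        rw [abs_of_nonneg (by linarith)]
        rw [abs_of_nonneg (by linarith)] at hrsabs
        linarith
      · have h1 : s ⊓ r = r := min_eq_right hc
        have h2 : s ⊔ r = s := max_eq_left hc
        rw [h1] at hx1; rw [h2] at hx2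
        rw [abs_of_nonpos (by linarith)]
        rw [abs_of_nonpos (by linarith)] at hrsabs
        linarith
    have := hδprop hx0 hxd
    rw [Real.dist_eq] at this
    rw [Real.norm_eq_abs]
    exact this.le
  have habs : (0:ℝ) < |r - s| := abs_pos.mpr hne
  calc dist (slope (fun r' => T r' f φ) s r) (T s y φ)
      = |(r - s)⁻¹ * ∫ r' in s..r, (T r' y φ - T s y φ)| := by
        rw [Real.dist_eq, hslope, hdiff, key]
    _ = |(r - s)⁻¹| * |∫ r' in s..r, (T r' y φ - T s y φ)| := abs_mul _ _
    _ ≤ |(r - s)⁻¹| * ((ε/2) * |r - s|) := by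
        have : |∫ r' in s..r, (T r' y φ - T s y φ)| ≤ (ε/2) * |r - s| := by
          rw [← Real.norm_eq_abs]; exact ibound
        gcongr
    _ = (ε/2) * (|r - s|⁻¹ * |r - s|) := by rw [abs_inv]; ring
    _ = ε/2 := by rw [inv_mul_cancel₀ habs.ne', mul_one]
    _ < ε := by linarith
end
end

section
/- Let X be a Banach space, F ∈ 𝓕_X, t, l > 0, and Φ ⊂ X a set. Assume there is an increasing sequence (g_k) of natural numbers such that the weak limit w-lim_{k→∞} F(t/g_k)^{[g_k s]} g exists for every g ∈ Φ and every rational s ∈ [0, l). Then this weak limit exists for every g in the closed linear span of Φ and every real s ∈ [0, l), and the operators T_s g := w-lim_{k→∞} F(t/g_k)^{[g_k s/t]} g on the closed span of Φ satisfy: (a) T_s is linear and there exist M ≥ 1, a ∈ ℝ with ‖T_s g‖ ≤ M·exp(a·s)·‖g‖; (b) s ↦ T_s g is norm-continuous on [0, l); (c) if f lies in the closed span of Φ, f ∈ D(F'(0)) and F'(0)f lies in the closed span of Φ, then d/ds(T_s f) = T_s F'(0)f on [0, l); (d) if φ ∈ D((F*)'(0)), then (T_m f, φ) − (T_p f, φ)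 = ∫_p^m (T_s f, (F*)'(0)φ) ds for m, p ∈ [0, l) and f in the closed span of Φ; (e) if φ ∈ D((F*)'(0)), then d/ds (T_s f, φ) = (T_s f, (F*)'(0)φ); (f) if moreover D((F*)'(0)) is weak*-dense in X* and f is as in (c), then T_s f ∈ D(((F*)'(0))*) for s ∈ [0, l), D(((F*)'(0))*) ⊇ D(F'(0)) with ((F*)'(0))* f = F'(0)f, and d/ds(T_s f) = ((F*)'(0))* T_s f for all s ∈ [0, l). -/
open Filter Topology MeasureTheory

noncomputable section

variable {X : Type*} [NormedAddCommGroup X] [NormedSpace ℝ X] [CompleteSpace X]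

/-- The closed linear span of a set. -/
def closedSpan (Φ : Set X) : Submodule ℝ X := (Submodule.span ℝ Φ).topologicalClosure

/-- `y` is a value at `x` of the adjoint `((F*)'(0))*` (restricted to `X`). -/
def AdjAdjRel (F : ℝ → (X →L[ℝ] X)) (x y : X) : Prop :=
  ∀ φ ψ : StrongDual ℝ X, AdjDerivAtZero F φ ψ → ψ x = φ y

section ChAux

variable {F : ℝ → (X →L[ℝ] X)} {M a : ℝ} {t : ℝ} {gk : ℕ → ℕ}

/-- Power-norm bound. -/
lemma ch_pow_norm (hMF : MemFClass F M a) (hM : 1 ≤ M) (ht : 0 < t)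
    {N m : ℕ} {c : ℝ} (hc : 0 ≤ c) (hm : (m : ℝ) * t ≤ (N : ℝ) * c) :
    ‖(F (t / (N : ℝ))) ^ m‖ ≤ M * Real.exp (max a 0 * c) := by
  have hexp1 : (1 : ℝ) ≤ Real.exp (max a 0 * c) := by
    rw [Real.one_le_exp_iff]
    positivity
  have hMexp : (1 : ℝ) ≤ M * Real.exp (max a 0 * c) := by nlinarith
  rcases Nat.eq_zero_or_pos N with hN | hN
  · subst hN
    simp only [Nat.cast_zero, div_zero, hMF.1, one_pow]
    calc ‖(1 : X →L[ℝ] X)‖ ≤ 1 := by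
          rw [ContinuousLinearMap.one_def]; exact ContinuousLinearMap.norm_id_le
      _ ≤ _ := hMexp
  rcases Nat.eq_zero_or_pos m with hm0 | hm0
  · subst hm0
    simp only [pow_zero]
    calc ‖(1 : X →L[ℝ] X)‖ ≤ 1 := by
          rw [ContinuousLinearMap.one_def]; exact ContinuousLinearMap.norm_id_le
      _ ≤ _ := hMexp
  have h1 := hMF.2.1 N m hN hm0 t ht.le
  refine h1.trans ?_
  have hNpos : (0 : ℝ) < (N : ℝ) := by exact_mod_cast hN
  have harg : a * m * t / N ≤ max a 0 * c := by
    have hmtN : (m : ℝ) * t / N ≤ c := by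
      rw [div_le_iff₀ hNpos]; linarith [hm]
    have h2 : a * m * t / N ≤ max a 0 * ((m : ℝ) * t / N) := by
      have h2' := mul_le_mul_of_nonneg_right (le_max_left a 0)
        (show (0:ℝ) ≤ (m : ℝ) * t / N by positivity)
      calc a * m * t / N = a * ((m : ℝ) * t / N) := by ring
        _ ≤ _ := h2'
    exact h2.trans (mul_le_mul_of_nonneg_left hmtN (le_max_right a 0))
  have := Real.exp_le_exp.2 harg
  nlinarith [Real.exp_pos (a * m * t / N), Real.exp_pos (max a 0 * c)]

/-- The basic approximating operators. -/
def chA (F : ℝ → (X →L[ℝ] X)) (t : ℝ) (gk : ℕ → ℕ) (σ : ℝ) (k : ℕ) : X →L[ℝ] X :=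
  (F (t / (gk k : ℝ))) ^ (⌊(gk k : ℝ) * σ / t⌋₊)

lemma ch_floor_mul_le {n : ℕ} {σ c : ℝ} (ht : 0 < t) (h0 : 0 ≤ σ) (hσc : σ ≤ c) :
    ((⌊(n : ℝ) * σ / t⌋₊ : ℝ)) * t ≤ (n : ℝ) * c := by
  have h1 : ((⌊(n : ℝ) * σ / t⌋₊ : ℝ)) ≤ (n : ℝ) * σ / t :=
    Nat.floor_le (by positivity)
  have h2 : ((⌊(n : ℝ) * σ / t⌋₊ : ℝ)) * t ≤ (n : ℝ) * σ := by
    rw [← le_div_iff₀ ht]; exact h1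
  refine h2.trans ?_
  have : (0:ℝ) ≤ (n:ℝ) := by positivity
  nlinarith

lemma chA_norm (hMF : MemFClass F M a) (hM : 1 ≤ M) (ht : 0 < t)
    {σ c : ℝ} (h0 : 0 ≤ σ) (hσc : σ ≤ c) (k : ℕ) :
    ‖chA F t gk σ k‖ ≤ M * Real.exp (max a 0 * c) :=
  ch_pow_norm hMF hM ht (h0.trans hσc) (ch_floor_mul_le ht h0 hσc)

lemma ch_deriv_small (hMF : MemFClass F M a) {f y : X} (hf : DerivAtZero F f y)
    {ε : ℝ} (hε : 0 < ε) :
    ∃ δ > 0, ∀ h' : ℝ, 0 < h' → h' < δ → ‖F h' f - f‖ ≤ (‖y‖ + ε) * h' := by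
  have h1 : Tendsto (fun h : ℝ => ‖h⁻¹ • (F h f - F 0 f)‖) (𝓝[>] (0 : ℝ)) (𝓝 ‖y‖) :=
    hf.norm
  have h2 : ∀ᶠ h in 𝓝[>] (0 : ℝ), ‖h⁻¹ • (F h f - F 0 f)‖ < ‖y‖ + ε :=
    h1.eventually_lt_const (by linarith)
  rw [eventually_nhdsWithin_iff] at h2
  rcases Metric.eventually_nhds_iff.1 h2 with ⟨δ, hδ, hδ2⟩
  refine ⟨δ, hδ, fun h' h'0 h'δ => ?_⟩
  have := hδ2 (y := h') (by simpa [abs_of_pos h'0] using h'δ) h'0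
  rw [hMF.1] at this
  have h3 : ‖F h' f - f‖ = h' * ‖(h')⁻¹ • (F h' f - (1 : X →L[ℝ] X) f)‖ := by
    rw [norm_smul, norm_inv, Real.norm_eq_abs, abs_of_pos h'0]
    field_simp
    rfl
  rw [h3]
  simp only [ContinuousLinearMap.one_apply] at this ⊢
  nlinarith [this]

lemma ch_telescope (T : X →L[ℝ] X) (x : X) {m' m : ℕ} (h : m' ≤ m) :
    (T ^ m) x - (T ^ m') x = ∑ j ∈ Finset.Ico m' m, (T ^ j) (T x - x) := by
  induction m, h using Nat.le_induction with
  | base => simp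
  | succ n hn ih =>
    rw [Finset.sum_Ico_succ_top (by omega), ← ih]
    rw [pow_succ, ContinuousLinearMap.mul_apply]
    simp only [map_sub]
    abel

end ChAux

section ChWeak

variable {F : ℝ → (X →L[ℝ] X)} {M a : ℝ} {t : ℝ} {gk : ℕ → ℕ}

lemma ch_weak_norm {u : ℕ → X} {L : X}
    (hu : ∀ φ : StrongDual ℝ X, Tendsto (fun k => φ (u k)) atTop (𝓝 (φ L)))
    {C : ℝ} (hC : ∀ᶠ k in atTop, ‖u k‖ ≤ C) : ‖L‖ ≤ C := by
  rcases eq_or_ne L 0 with h0 | h0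
  · rcases hC.exists with ⟨k, hk⟩
    simp only [h0, norm_zero]
    exact le_trans (norm_nonneg _) hk
  · obtain ⟨φ, hφ1, hφL⟩ := exists_dual_vector ℝ L (norm_ne_zero_iff.2 h0)
    have hLφ : ‖L‖ = φ L := by rw [hφL]; norm_cast
    rw [hLφ]
    refine le_of_tendsto (hu φ) (hC.mono fun k hk => ?_)
    calc φ (u k) ≤ |φ (u k)| := le_abs_self _
      _ ≤ ‖φ‖ * ‖u k‖ := φ.le_opNorm _
      _ ≤ 1 * C := by rw [hφ1]; exact mul_le_mul_of_nonneg_left hk zero_le_one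
      _ = C := one_mul C

lemma ch_weak_norm' {u : ℕ → X} {L : X}
    (hu : ∀ φ : StrongDual ℝ X, Tendsto (fun k => φ (u k)) atTop (𝓝 (φ L)))
    {C : ℝ} (hC : ∀ θ : ℝ, 0 < θ → ∀ᶠ k in atTop, ‖u k‖ ≤ C + θ) : ‖L‖ ≤ C :=
  le_of_forall_pos_le_add fun θ hθ => ch_weak_norm hu (hC θ hθ)

lemma ch_weak_closed (Aop : ℕ → X →L[ℝ] X) {C : ℝ} (hC : ∀ k, ‖Aop k‖ ≤ C)
    {Φ : Set X}
    (hΦ : ∀ g ∈ Φ, ∃ Lm : X, ∀ φ : StrongDual ℝ X,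
      Tendsto (fun k => φ (Aop k g)) atTop (𝓝 (φ Lm))) :
    ∀ g ∈ closedSpan Φ, ∃ Lm : X, ∀ φ : StrongDual ℝ X,
      Tendsto (fun k => φ (Aop k g)) atTop (𝓝 (φ Lm)) := by
  have hC0 : 0 ≤ C := le_trans (norm_nonneg _) (hC 0)
  set G : Set X := {g | ∃ Lm : X, ∀ φ : StrongDual ℝ X,
      Tendsto (fun k => φ (Aop k g)) atTop (𝓝 (φ Lm))} with hGdef
  have hGsub : ∃ p : Submodule ℝ X, (p : Set X) = G := by
    refine ⟨{ carrier := G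
              add_mem' := ?_
              zero_mem' := ?_
              smul_mem' := ?_ }, rfl⟩
    · rintro g₁ g₂ ⟨L₁, hL₁⟩ ⟨L₂, hL₂⟩
      refine ⟨L₁ + L₂, fun φ => ?_⟩
      have := (hL₁ φ).add (hL₂ φ)
      simpa [map_add] using this
    · exact ⟨0, fun φ => by simpa using tendsto_const_nhds⟩
    · rintro c g ⟨L₁, hL₁⟩
      refine ⟨c • L₁, fun φ => ?_⟩
      have := (hL₁ φ).const_mul c
      simpa [_root_.map_smul, smul_eq_mul] using this
  -- closedness of G
  have hGclosed : IsClosed G := by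
    refine isClosed_of_closure_subset fun g hg => ?_
    have hseq : ∀ j : ℕ, ∃ b ∈ G, ‖g - b‖ < 1 / (j + 1) := by
      intro j
      rcases Metric.mem_closure_iff.1 hg (1 / (j + 1)) (by positivity) with ⟨b, hbG, hb⟩
      exact ⟨b, hbG, by rwa [dist_eq_norm] at hb⟩
    choose b hbG hb using hseq
    choose Lm hLm using hbG
    have key : ∀ i j : ℕ, ‖Lm i - Lm j‖ ≤ C * (1 / (i + 1) + 1 / (j + 1)) := by
      intro i j
      refine ch_weak_norm (u := fun k => Aop k (b i - b j)) (fun φ => ?_)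
        (Eventually.of_forall fun k => ?_)
      · have := (hLm i φ).sub (hLm j φ)
        simpa [map_sub] using this
      · calc ‖Aop k (b i - b j)‖ ≤ ‖Aop k‖ * ‖b i - b j‖ := (Aop k).le_opNorm _
          _ ≤ C * ‖b i - b j‖ := mul_le_mul_of_nonneg_right (hC k) (norm_nonneg _)
          _ ≤ C * (1 / (i + 1) + 1 / (j + 1)) := by
              refine mul_le_mul_of_nonneg_left ?_ hC0
              calc ‖b i - b j‖ ≤ ‖b i - g‖ + ‖g - b j‖ := by
                    simpa using norm_sub_le_norm_sub_add_norm_sub (b i) g (b j)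
                _ ≤ 1 / (i + 1) + 1 / (j + 1) := by
                    rw [norm_sub_rev]
                    exact add_le_add (hb i).le (hb j).le
    have hcauchy : CauchySeq Lm := by
      refine cauchySeq_of_le_tendsto_0 (fun N => C * (2 / (N + 1))) (fun n m N hn hm => ?_) ?_
      · rw [dist_eq_norm]
        refine (key n m).trans ?_
        have h1 : (1:ℝ) / (n + 1) ≤ 1 / (N + 1) := by
          apply one_div_le_one_div_of_le (by positivity)
          have : (N:ℝ) ≤ n := by exact_mod_cast hn
          linarith
        have h2 : (1:ℝ) / (m + 1) ≤ 1 / (N + 1) := by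
          apply one_div_le_one_div_of_le (by positivity)
          have : (N:ℝ) ≤ m := by exact_mod_cast hm
          linarith
        have : (1:ℝ) / (n + 1) + 1 / (m + 1) ≤ 2 / (N + 1) := by
          rw [show (2:ℝ) / (N+1) = 1/(N+1) + 1/(N+1) by ring]
          exact add_le_add h1 h2
        exact mul_le_mul_of_nonneg_left this hC0
      · have h0 : Tendsto (fun N : ℕ => (2:ℝ) / (N + 1)) atTop (𝓝 0) := by
          have := tendsto_one_div_add_atTop_nhds_zero_nat (𝕜 := ℝ)
          have h2 := this.const_mul (2:ℝ)
          simpa [mul_one_div, div_eq_mul_inv] using h2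
        have := h0.const_mul C
        simpa using this
    obtain ⟨L, hL⟩ := cauchySeq_tendsto_of_complete hcauchy
    refine ⟨L, fun φ => Metric.tendsto_atTop.2 fun ε hε => ?_⟩
    set P : ℝ := ‖φ‖ + 1 with hP
    have hP0 : 0 < P := by positivity
    have hφP : ‖φ‖ ≤ P := by simp [hP]
    have hj1 : ∀ᶠ j : ℕ in atTop, ‖Lm j - L‖ < ε / (4 * P) := by
      have := (hL.sub_const L).norm
      simp only [sub_self, norm_zero] at this
      exact this.eventually_lt_const (by positivity)
    have hj2 : ∀ᶠ j : ℕ in atTop, (C + 1) * P * (1 / (j + 1)) < ε / 4 := by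
      have h0 : Tendsto (fun j : ℕ => (C + 1) * P * (1 / (j + 1))) atTop (𝓝 0) := by
        have := tendsto_one_div_add_atTop_nhds_zero_nat.const_mul ((C + 1) * P)
        simpa using this
      exact h0.eventually_lt_const (by positivity)
    obtain ⟨j, hj1', hj2'⟩ := (hj1.and hj2).exists
    obtain ⟨N₀, hN₀⟩ := Metric.tendsto_atTop.1 (hLm j φ) (ε / 4) (by positivity)
    refine ⟨N₀, fun k hk => ?_⟩
    have hterm1 : |φ (Aop k g) - φ (Aop k (b j))| ≤ (C + 1) * P * (1 / (j + 1)) := by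
      have : φ (Aop k g) - φ (Aop k (b j)) = φ (Aop k (g - b j)) := by
        simp [map_sub]
      rw [this]
      calc |φ (Aop k (g - b j))| ≤ ‖φ‖ * ‖Aop k (g - b j)‖ := φ.le_opNorm _
        _ ≤ ‖φ‖ * (C * ‖g - b j‖) := by
            refine mul_le_mul_of_nonneg_left ?_ (norm_nonneg _)
            calc ‖Aop k (g - b j)‖ ≤ ‖Aop k‖ * ‖g - b j‖ := (Aop k).le_opNorm _
              _ ≤ C * ‖g - b j‖ := mul_le_mul_of_nonneg_right (hC k) (norm_nonneg _)
        _ ≤ P * ((C + 1) * (1 / (j + 1))) := by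
            refine mul_le_mul hφP ?_ (by positivity) hP0.le
            refine mul_le_mul (by linarith) (hb j).le (norm_nonneg _) (by positivity)
        _ = (C + 1) * P * (1 / (j + 1)) := by ring
    have hterm2 : |φ (Aop k (b j)) - φ (Lm j)| < ε / 4 := by
      have := hN₀ k hk
      rwa [Real.dist_eq] at this
    have hterm3 : |φ (Lm j) - φ L| ≤ P * ‖Lm j - L‖ := by
      calc |φ (Lm j) - φ L| = |φ (Lm j - L)| := by rw [map_sub]
        _ ≤ ‖φ‖ * ‖Lm j - L‖ := φ.le_opNorm _
        _ ≤ P * ‖Lm j - L‖ := mul_le_mul_of_nonneg_right hφP (norm_nonneg _)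
    have hterm3' : |φ (Lm j) - φ L| < ε / 4 := by
      refine hterm3.trans_lt ?_
      calc P * ‖Lm j - L‖ < P * (ε / (4 * P)) :=
            mul_lt_mul_of_pos_left hj1' hP0
        _ = ε / 4 := by field_simp
    rw [Real.dist_eq]
    have habs1 := abs_sub_le (φ (Aop k g)) (φ (Aop k (b j))) (φ L)
    have habs2 := abs_sub_le (φ (Aop k (b j))) (φ (Lm j)) (φ L)
    linarith [hterm1, hterm2, hterm3', hj2']
  obtain ⟨p, hp⟩ := hGsub
  intro g hg
  have h1 : closedSpan Φ ≤ p := by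
    apply Submodule.topologicalClosure_minimal
    · rw [← SetLike.coe_subset_coe]
      apply Submodule.span_le.2
      intro x hx
      rw [hp]
      exact hΦ x hx
    · rw [hp]; exact hGclosed
  have : g ∈ G := by rw [← hp]; exact h1 hg
  exact this

end ChWeak

section ChLip

variable {F : ℝ → (X →L[ℝ] X)} {M a : ℝ} {t : ℝ} {gk : ℕ → ℕ}

lemma ch_tendsto_h0 (ht : 0 < t) (hgk : StrictMono gk) :
    Tendsto (fun k => t / (gk k : ℝ)) atTop (𝓝[>] (0 : ℝ)) := by
  rw [tendsto_nhdsWithin_iff]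
  constructor
  · have h1 : Tendsto (fun k => ((gk k : ℕ) : ℝ)) atTop atTop :=
      tendsto_natCast_atTop_atTop.comp hgk.tendsto_atTop
    exact Tendsto.div_atTop tendsto_const_nhds h1
  · filter_upwards [eventually_ge_atTop 1] with k hk
    have h1 : (1 : ℕ) ≤ gk k := le_trans hk hgk.le_apply
    have h2 : (0 : ℝ) < (gk k : ℝ) := by exact_mod_cast h1
    exact Set.mem_Ioi.2 (by positivity)

lemma ch_lip (hMF : MemFClass F M a) (hM : 1 ≤ M) (ht : 0 < t) (hgk : StrictMono gk)
    {f y : X} (hf : DerivAtZero F f y) {c : ℝ} (hc : 0 ≤ c) {ε : ℝ} (hε : 0 < ε) :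
    ∃ K : ℕ, ∀ k ≥ K, 0 < gk k ∧ ∀ σ₁ σ₂ : ℝ, σ₁ ∈ Set.Icc 0 c → σ₂ ∈ Set.Icc 0 c →
      σ₁ ≤ σ₂ →
      ‖chA F t gk σ₂ k f - chA F t gk σ₁ k f‖ ≤
        M * Real.exp (max a 0 * c) * (‖y‖ + ε) * ((σ₂ - σ₁) + t / (gk k : ℝ)) := by
  obtain ⟨δ, hδ0, hδ⟩ := ch_deriv_small hMF hf hε
  obtain ⟨K₀, hK₀⟩ := exists_nat_gt (t / δ)
  refine ⟨max 1 K₀, fun k hk => ?_⟩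
  have hk1 : 1 ≤ k := le_trans (le_max_left 1 K₀) hk
  have hkK₀ : K₀ ≤ k := le_trans (le_max_right 1 K₀) hk
  have hn1 : 1 ≤ gk k := le_trans hk1 hgk.le_apply
  have hnpos : 0 < gk k := hn1
  refine ⟨hnpos, fun σ₁ σ₂ hσ₁ hσ₂ h12 => ?_⟩
  set n : ℕ := gk k with hn
  have hnR : (0 : ℝ) < (n : ℝ) := by exact_mod_cast hnpos
  set h : ℝ := t / (n : ℝ) with hh
  have hhpos : 0 < h := by positivity
  have hhδ : h < δ := by
    rw [hh, div_lt_iff₀ hnR]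
    have h1 : t / δ < (K₀ : ℝ) := hK₀
    have h2 : (K₀ : ℝ) ≤ (n : ℝ) := by
      have : K₀ ≤ n := le_trans hkK₀ hgk.le_apply
      exact_mod_cast this
    rw [div_lt_iff₀ hδ0] at h1
    nlinarith
  set m₁ : ℕ := ⌊(n : ℝ) * σ₁ / t⌋₊ with hm₁
  set m₂ : ℕ := ⌊(n : ℝ) * σ₂ / t⌋₊ with hm₂
  have hm12 : m₁ ≤ m₂ := by
    refine Nat.floor_le_floor ?_
    gcongr
  have hwb : ‖F h f - f‖ ≤ (‖y‖ + ε) * h := hδ h hhpos hhδ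
  have htel : chA F t gk σ₂ k f - chA F t gk σ₁ k f
      = ∑ j ∈ Finset.Ico m₁ m₂, ((F h) ^ j) ((F h) f - f) := by
    rw [chA, chA, ← hn, ← hm₁, ← hm₂, ← hh]
    exact ch_telescope (F h) f hm12
  rw [htel]
  set B : ℝ := M * Real.exp (max a 0 * c) with hB
  have hB1 : (1 : ℝ) ≤ B := by
    have : (1:ℝ) ≤ Real.exp (max a 0 * c) := by
      rw [Real.one_le_exp_iff]; positivity
    nlinarith
  have hB0 : (0 : ℝ) ≤ B := by linarith
  have hjb : ∀ j ∈ Finset.Ico m₁ m₂, ‖((F h) ^ j) ((F h) f - f)‖ ≤ B * ((‖y‖ + ε) * h) := by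
    intro j hj
    have hjm : j ≤ m₂ := (Finset.mem_Ico.1 hj).2.le
    have hpow : ‖(F h) ^ j‖ ≤ B := by
      rw [hh]
      apply ch_pow_norm hMF hM ht hc
      have h1 : ((j : ℝ)) * t ≤ ((m₂ : ℝ)) * t := by
        have : (j : ℝ) ≤ (m₂ : ℝ) := by exact_mod_cast hjm
        nlinarith
      exact h1.trans (ch_floor_mul_le ht (hσ₂.1) (hσ₂.2))
    calc ‖((F h) ^ j) ((F h) f - f)‖ ≤ ‖(F h) ^ j‖ * ‖(F h) f - f‖ :=
          ((F h) ^ j).le_opNorm _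
      _ ≤ B * ((‖y‖ + ε) * h) := by
          apply mul_le_mul hpow hwb (norm_nonneg _) hB0
  have hsum : ‖∑ j ∈ Finset.Ico m₁ m₂, ((F h) ^ j) ((F h) f - f)‖
      ≤ (m₂ - m₁ : ℕ) * (B * ((‖y‖ + ε) * h)) := by
    refine (norm_sum_le _ _).trans ?_
    have h2 := Finset.sum_le_card_nsmul (Finset.Ico m₁ m₂) _ _ hjb
    rwa [Nat.card_Ico, nsmul_eq_mul] at h2
  refine hsum.trans ?_
  -- (m₂ - m₁) * h ≤ (σ₂ - σ₁) + h
  have hcard : ((m₂ - m₁ : ℕ) : ℝ) * h ≤ (σ₂ - σ₁) + h := by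
    have hsub : ((m₂ - m₁ : ℕ) : ℝ) = (m₂ : ℝ) - (m₁ : ℝ) := by
      rw [Nat.cast_sub hm12]
    have hf2 : (m₂ : ℝ) ≤ (n : ℝ) * σ₂ / t :=
      Nat.floor_le (div_nonneg (mul_nonneg (by positivity) hσ₂.1) ht.le)
    have hf1 : (n : ℝ) * σ₁ / t < (m₁ : ℝ) + 1 := Nat.lt_floor_add_one _
    have hid : ((n : ℝ) * σ₂ / t - ((n : ℝ) * σ₁ / t - 1)) * h = (σ₂ - σ₁) + h := by
      rw [hh]; field_simp; ring
    rw [hsub]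
    calc ((m₂ : ℝ) - (m₁ : ℝ)) * h ≤ ((n : ℝ) * σ₂ / t - ((n : ℝ) * σ₁ / t - 1)) * h := by
          apply mul_le_mul_of_nonneg_right _ hhpos.le
          linarith
      _ = (σ₂ - σ₁) + h := hid
  calc ((m₂ - m₁ : ℕ) : ℝ) * (B * ((‖y‖ + ε) * h))
      = (B * (‖y‖ + ε)) * (((m₂ - m₁ : ℕ) : ℝ) * h) := by ring
    _ ≤ (B * (‖y‖ + ε)) * ((σ₂ - σ₁) + h) := by
        exact mul_le_mul_of_nonneg_left hcard (mul_nonneg hB0 (by positivity))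
    _ = B * (‖y‖ + ε) * ((σ₂ - σ₁) + t / (gk k : ℝ)) := by rw [hh, hn]
    _ = M * Real.exp (max a 0 * c) * (‖y‖ + ε) * ((σ₂ - σ₁) + t / (gk k : ℝ)) := by
        rw [hB]

lemma ch_unif (hMF : MemFClass F M a) (hM : 1 ≤ M) (ht : 0 < t) (hgk : StrictMono gk)
    {c : ℝ} (hc : 0 ≤ c) (g : X) {ε : ℝ} (hε : 0 < ε) :
    ∃ C : ℝ, 1 ≤ C ∧ ∃ K : ℕ, ∀ k ≥ K, 0 < gk k ∧ ∀ σ₁ σ₂ : ℝ,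
      σ₁ ∈ Set.Icc 0 c → σ₂ ∈ Set.Icc 0 c →
      ‖chA F t gk σ₁ k g - chA F t gk σ₂ k g‖ ≤ ε + C * (|σ₁ - σ₂| + t / (gk k : ℝ)) := by
  set B : ℝ := M * Real.exp (max a 0 * c) with hB
  have hB1 : (1 : ℝ) ≤ B := by
    have : (1:ℝ) ≤ Real.exp (max a 0 * c) := by
      rw [Real.one_le_exp_iff]; positivity
    nlinarith
  have hB0 : (0 : ℝ) < B := by linarith
  obtain ⟨f, hfD, hfd⟩ := hMF.2.2.exists_dist_lt g (show (0:ℝ) < ε / (2 * B) by positivity)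
  obtain ⟨y, hy⟩ := hfD
  have hgf : ‖g - f‖ < ε / (2 * B) := by rwa [dist_eq_norm] at hfd
  obtain ⟨K, hK⟩ := ch_lip hMF hM ht hgk hy hc one_pos
  have hC1 : (1:ℝ) ≤ B * (‖y‖ + 1) := by nlinarith [norm_nonneg y]
  refine ⟨B * (‖y‖ + 1), hC1, K, fun k hk => ?_⟩
  obtain ⟨hnpos, hlip⟩ := hK k hk
  refine ⟨hnpos, fun σ₁ σ₂ hσ₁ hσ₂ => ?_⟩
  have hBop : ∀ σ ∈ Set.Icc (0:ℝ) c, ∀ x : X, ‖chA F t gk σ k x‖ ≤ B * ‖x‖ := by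
    intro σ hσ x
    calc ‖chA F t gk σ k x‖ ≤ ‖chA F t gk σ k‖ * ‖x‖ := (chA F t gk σ k).le_opNorm x
      _ ≤ B * ‖x‖ := mul_le_mul_of_nonneg_right
          (chA_norm hMF hM ht hσ.1 hσ.2 k) (norm_nonneg _)
  have main : ∀ σ₁ σ₂ : ℝ, σ₁ ∈ Set.Icc (0:ℝ) c → σ₂ ∈ Set.Icc (0:ℝ) c → σ₁ ≤ σ₂ →
      ‖chA F t gk σ₁ k g - chA F t gk σ₂ k g‖ ≤ ε + B * (‖y‖ + 1) * (|σ₁ - σ₂| + t / (gk k : ℝ)) := by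
    intro σ₁ σ₂ h₁ h₂ h12
    have hdecomp : chA F t gk σ₁ k g - chA F t gk σ₂ k g
        = chA F t gk σ₁ k (g - f) + (chA F t gk σ₁ k f - chA F t gk σ₂ k f)
          + chA F t gk σ₂ k (f - g) := by
      simp only [map_sub]
      abel
    rw [hdecomp]
    have e1 : ‖chA F t gk σ₁ k (g - f)‖ ≤ B * ‖g - f‖ := hBop σ₁ h₁ _
    have e3 : ‖chA F t gk σ₂ k (f - g)‖ ≤ B * ‖g - f‖ := by
      rw [norm_sub_rev g f] at *
      exact hBop σ₂ h₂ _
    have e2 : ‖chA F t gk σ₁ k f - chA F t gk σ₂ k f‖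
        ≤ B * (‖y‖ + 1) * ((σ₂ - σ₁) + t / (gk k : ℝ)) := by
      rw [norm_sub_rev]
      exact hlip σ₁ σ₂ h₁ h₂ h12
    have habs : |σ₁ - σ₂| = σ₂ - σ₁ := by
      rw [abs_sub_comm]; exact abs_of_nonneg (by linarith)
    rw [habs]
    have hBgf : B * ‖g - f‖ ≤ ε / 2 := by
      have := mul_le_mul_of_nonneg_left hgf.le hB0.le
      calc B * ‖g - f‖ ≤ B * (ε / (2 * B)) := mul_le_mul_of_nonneg_left hgf.le hB0.le
        _ = ε / 2 := by field_simp
    calc ‖chA F t gk σ₁ k (g - f) + (chA F t gk σ₁ k f - chA F t gk σ₂ k f)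
          + chA F t gk σ₂ k (f - g)‖
        ≤ ‖chA F t gk σ₁ k (g - f) + (chA F t gk σ₁ k f - chA F t gk σ₂ k f)‖
          + ‖chA F t gk σ₂ k (f - g)‖ := norm_add_le _ _
      _ ≤ ‖chA F t gk σ₁ k (g - f)‖ + ‖chA F t gk σ₁ k f - chA F t gk σ₂ k f‖
          + ‖chA F t gk σ₂ k (f - g)‖ := by
            have := norm_add_le (chA F t gk σ₁ k (g - f))
              (chA F t gk σ₁ k f - chA F t gk σ₂ k f)
            linarith
      _ ≤ ε / 2 + B * (‖y‖ + 1) * ((σ₂ - σ₁) + t / (gk k : ℝ)) + ε / 2 := by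
            have h3 : ‖chA F t gk σ₁ k (g - f)‖ ≤ ε / 2 := e1.trans hBgf
            have h4 : ‖chA F t gk σ₂ k (f - g)‖ ≤ ε / 2 := e3.trans hBgf
            linarith
      _ = ε + B * (‖y‖ + 1) * ((σ₂ - σ₁) + t / (gk k : ℝ)) := by ring
  rcases le_total σ₁ σ₂ with h12 | h21
  · exact main σ₁ σ₂ hσ₁ hσ₂ h12
  · have := main σ₂ σ₁ hσ₂ hσ₁ h21
    rwa [norm_sub_rev, abs_sub_comm] at this

end ChLip

section ChExists

variable {F : ℝ → (X →L[ℝ] X)} {M a : ℝ} {t : ℝ} {gk : ℕ → ℕ}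

lemma ch_hsmall (ht : 0 < t) (hgk : StrictMono gk) {b : ℝ} (hb : 0 < b) :
    ∀ᶠ k in atTop, t / (gk k : ℝ) ≤ b := by
  have h0 : Tendsto (fun k => t / (gk k : ℝ)) atTop (𝓝 0) :=
    (ch_tendsto_h0 ht hgk).mono_right nhdsWithin_le_nhds
  exact (h0.eventually_lt_const hb).mono fun k hk => hk.le

lemma ch_exists (hMF : MemFClass F M a) (hM : 1 ≤ M) (ht : 0 < t) (hgk : StrictMono gk)
    {c : ℝ} (hc : 0 < c) {S : Set ℝ}
    (hS : ∀ σ ∈ Set.Ico (0:ℝ) c, ∀ η : ℝ, 0 < η →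
      ∃ σ' ∈ S, σ' ∈ Set.Ico (0:ℝ) c ∧ |σ - σ'| ≤ η)
    {Φ : Set X}
    (hΦ : ∀ g ∈ Φ, ∀ σ' ∈ S, σ' ∈ Set.Ico (0:ℝ) c →
      ∃ Lm : X, ∀ φ : StrongDual ℝ X,
        Tendsto (fun k => φ (chA F t gk σ' k g)) atTop (𝓝 (φ Lm))) :
    ∀ g ∈ closedSpan Φ, ∀ σ ∈ Set.Ico (0:ℝ) c,
      ∃ Lm : X, ∀ φ : StrongDual ℝ X,
        Tendsto (fun k => φ (chA F t gk σ k g)) atTop (𝓝 (φ Lm)) := by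
  set B : ℝ := M * Real.exp (max a 0 * c) with hB
  have hB1 : (1 : ℝ) ≤ B := by
    have : (1:ℝ) ≤ Real.exp (max a 0 * c) := by
      rw [Real.one_le_exp_iff]; positivity
    nlinarith
  have step1 : ∀ σ' ∈ S, σ' ∈ Set.Ico (0:ℝ) c → ∀ g ∈ closedSpan Φ,
      ∃ Lm : X, ∀ φ : StrongDual ℝ X,
        Tendsto (fun k => φ (chA F t gk σ' k g)) atTop (𝓝 (φ Lm)) := by
    intro σ' hσ'S hσ'I
    exact ch_weak_closed (fun k => chA F t gk σ' k)
      (fun k => chA_norm hMF hM ht hσ'I.1 hσ'I.2.le k)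
      (fun g hg => hΦ g hg σ' hσ'S hσ'I)
  intro g hg σ hσ
  have happrox : ∀ j : ℕ, ∃ σ', σ' ∈ S ∧ σ' ∈ Set.Ico (0:ℝ) c ∧ |σ - σ'| ≤ 1 / (j + 1) := by
    intro j
    obtain ⟨σ', h1, h2, h3⟩ := hS σ hσ (1 / (j + 1)) (by positivity)
    exact ⟨σ', h1, h2, h3⟩
  choose σ' hσ'S hσ'I hσ'd using happrox
  choose Lm hLm using fun j => step1 (σ' j) (hσ'S j) (hσ'I j) g hg
  -- distance estimate between the limits
  have hdist : ∀ ε : ℝ, 0 < ε → ∃ C : ℝ, 1 ≤ C ∧ ∀ i j : ℕ,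
      ‖Lm i - Lm j‖ ≤ ε + C * |σ' i - σ' j| := by
    intro ε hε
    obtain ⟨C, hC1, K, hK⟩ := ch_unif hMF hM ht hgk hc.le g hε
    refine ⟨C, hC1, fun i j => ?_⟩
    refine ch_weak_norm' (u := fun k => chA F t gk (σ' i) k g - chA F t gk (σ' j) k g)
      (L := Lm i - Lm j) (fun φ => ?_) (fun θ hθ => ?_)
    · have := (hLm i φ).sub (hLm j φ)
      simpa [map_sub] using this
    · have hsm := ch_hsmall ht hgk (show (0:ℝ) < θ / C by positivity)
      filter_upwards [eventually_ge_atTop K, hsm] with k hk1 hk2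
      obtain ⟨hpos, hbound⟩ := hK k hk1
      have h1 := hbound (σ' i) (σ' j)
        (Set.mem_Icc.2 ⟨(hσ'I i).1, (hσ'I i).2.le⟩)
        (Set.mem_Icc.2 ⟨(hσ'I j).1, (hσ'I j).2.le⟩)
      refine h1.trans ?_
      have hCθ : C * (t / (gk k : ℝ)) ≤ θ := by
        rw [← le_div_iff₀' (by linarith)]
        exact hk2
      nlinarith [abs_nonneg (σ' i - σ' j), le_trans zero_le_one hC1]
  -- Cauchy sequence
  have hcauchy : CauchySeq Lm := by
    refine Metric.cauchySeq_iff.2 fun ε hε => ?_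
    obtain ⟨C, hC1, hC⟩ := hdist (ε / 4) (by positivity)
    obtain ⟨N, hN⟩ := exists_nat_gt (4 * C / ε)
    refine ⟨N, fun i hi j hj => ?_⟩
    have hdij : |σ' i - σ' j| ≤ 2 / (N + 1) := by
      have h1 : |σ - σ' i| ≤ 1 / (i + 1) := hσ'd i
      have h2 : |σ - σ' j| ≤ 1 / (j + 1) := hσ'd j
      have h3 : (1:ℝ) / (i + 1) ≤ 1 / (N + 1) := by
        apply one_div_le_one_div_of_le (by positivity)
        have : (N:ℝ) ≤ i := by exact_mod_cast hi
        linarith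
      have h4 : (1:ℝ) / (j + 1) ≤ 1 / (N + 1) := by
        apply one_div_le_one_div_of_le (by positivity)
        have : (N:ℝ) ≤ j := by exact_mod_cast hj
        linarith
      calc |σ' i - σ' j| ≤ |σ' i - σ| + |σ - σ' j| := abs_sub_le _ _ _
        _ ≤ 1 / (N + 1) + 1 / (N + 1) := by
            rw [abs_sub_comm (σ' i) σ]
            exact add_le_add (h1.trans h3) (h2.trans h4)
        _ = 2 / (N + 1) := by ring
    rw [dist_eq_norm]
    have h5 := hC i j
    have hC2N : C * (2 / (N + 1)) < ε / 2 := by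
      have hNpos : (0:ℝ) < (N:ℝ) + 1 := by positivity
      have hN4 : 4 * C < ε * ((N:ℝ) + 1) := by
        rw [div_lt_iff₀ hε] at hN
        nlinarith
      have h7 : C * (2 / ((N:ℝ) + 1)) * ((N:ℝ) + 1) = 2 * C := by field_simp
      nlinarith [h7]
    have h6 : C * |σ' i - σ' j| ≤ C * (2 / (N + 1)) :=
      mul_le_mul_of_nonneg_left hdij (by linarith)
    calc ‖Lm i - Lm j‖ ≤ ε / 4 + C * |σ' i - σ' j| := h5
      _ ≤ ε / 4 + C * (2 / (N + 1)) := by linarith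
      _ < ε / 4 + ε / 2 := by linarith
      _ < ε := by linarith
  obtain ⟨L, hL⟩ := cauchySeq_tendsto_of_complete hcauchy
  refine ⟨L, fun φ => Metric.tendsto_atTop.2 fun ε hε => ?_⟩
  set P : ℝ := ‖φ‖ + 1 with hP
  have hP0 : 0 < P := by positivity
  have hφP : ‖φ‖ ≤ P := by simp [hP]
  obtain ⟨C, hC1, K, hK⟩ := ch_unif hMF hM ht hgk hc.le g
    (show (0:ℝ) < ε / (8 * P) by positivity)
  have hC0 : (0:ℝ) < C := lt_of_lt_of_le one_pos hC1
  -- choose j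
  have hj1 : ∀ᶠ j : ℕ in atTop, P * C * (1 / (j + 1)) ≤ ε / 8 := by
    have h0 : Tendsto (fun j : ℕ => P * C * (1 / (j + 1))) atTop (𝓝 0) := by
      have := tendsto_one_div_add_atTop_nhds_zero_nat.const_mul (P * C)
      simpa using this
    exact (h0.eventually_lt_const (by positivity)).mono fun j hj => hj.le
  have hj2 : ∀ᶠ j : ℕ in atTop, ‖Lm j - L‖ < ε / (4 * P) := by
    have := (hL.sub_const L).norm
    simp only [sub_self, norm_zero] at this
    exact this.eventually_lt_const (by positivity)
  obtain ⟨j, hj1', hj2'⟩ := (hj1.and hj2).exists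
  obtain ⟨N₀, hN₀⟩ := Metric.tendsto_atTop.1 (hLm j φ) (ε / 4) (by positivity)
  have hksmall := ch_hsmall ht hgk (show (0:ℝ) < ε / (8 * P * C) by positivity)
  obtain ⟨N₁, hN₁⟩ := (eventually_ge_atTop K |>.and hksmall).exists_forall_of_atTop
  refine ⟨max N₀ N₁, fun k hk => ?_⟩
  have hkN₀ : N₀ ≤ k := le_trans (le_max_left _ _) hk
  have hkN₁ : N₁ ≤ k := le_trans (le_max_right _ _) hk
  obtain ⟨hkK, hkh⟩ := hN₁ k hkN₁
  obtain ⟨hpos, hbound⟩ := hK k hkK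
  have hdiff : ‖chA F t gk σ k g - chA F t gk (σ' j) k g‖
      ≤ ε / (8 * P) + C * (1 / (j + 1) + t / (gk k : ℝ)) := by
    have h1 := hbound σ (σ' j) (Set.mem_Icc.2 ⟨hσ.1, hσ.2.le⟩)
      (Set.mem_Icc.2 ⟨(hσ'I j).1, (hσ'I j).2.le⟩)
    refine h1.trans ?_
    have := hσ'd j
    have h2 : |σ - σ' j| + t / (gk k : ℝ) ≤ 1 / (j + 1) + t / (gk k : ℝ) := by linarith
    nlinarith [le_trans zero_le_one hC1]
  have hterm1 : |φ (chA F t gk σ k g) - φ (chA F t gk (σ' j) k g)| ≤ 3 * ε / 8 := by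
    have heq : φ (chA F t gk σ k g) - φ (chA F t gk (σ' j) k g)
        = φ (chA F t gk σ k g - chA F t gk (σ' j) k g) := by rw [map_sub]
    rw [heq]
    have h1 : |φ (chA F t gk σ k g - chA F t gk (σ' j) k g)|
        ≤ ‖φ‖ * ‖chA F t gk σ k g - chA F t gk (σ' j) k g‖ := φ.le_opNorm _
    have h2 : ‖φ‖ * ‖chA F t gk σ k g - chA F t gk (σ' j) k g‖
        ≤ P * (ε / (8 * P) + C * (1 / (j + 1) + t / (gk k : ℝ))) := by
      apply mul_le_mul hφP hdiff (norm_nonneg _) hP0.le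
    have h3 : P * (ε / (8 * P)) = ε / 8 := by field_simp
    have h4 : P * C * (t / (gk k : ℝ)) ≤ ε / 8 := by
      have h5 : t / (gk k : ℝ) ≤ ε / (8 * P * C) := hkh
      have h6 := mul_le_mul_of_nonneg_left h5 (show (0:ℝ) ≤ P * C by positivity)
      calc P * C * (t / (gk k : ℝ)) ≤ P * C * (ε / (8 * P * C)) := h6
        _ = ε / 8 := by field_simp
    have hexp : P * (ε / (8 * P) + C * (1 / (j + 1) + t / (gk k : ℝ)))
        = P * (ε / (8 * P)) + P * C * (1 / (j + 1)) + P * C * (t / (gk k : ℝ)) := by ring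
    rw [hexp] at h2
    linarith [h1, h2, h3, h4, hj1']
  have hterm2 : |φ (chA F t gk (σ' j) k g) - φ (Lm j)| < ε / 4 := by
    have := hN₀ k hkN₀
    rwa [Real.dist_eq] at this
  have hterm3 : |φ (Lm j) - φ L| < ε / 4 := by
    have h1 : |φ (Lm j) - φ L| ≤ ‖φ‖ * ‖Lm j - L‖ := by
      rw [← map_sub]; exact φ.le_opNorm _
    have h2 : ‖φ‖ * ‖Lm j - L‖ < P * (ε / (4 * P)) := by
      apply mul_lt_mul' hφP hj2' (norm_nonneg _) hP0
    have h3 : P * (ε / (4 * P)) = ε / 4 := by field_simp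
    linarith
  rw [Real.dist_eq]
  have habs1 := abs_sub_le (φ (chA F t gk σ k g)) (φ (chA F t gk (σ' j) k g)) (φ L)
  have habs2 := abs_sub_le (φ (chA F t gk (σ' j) k g)) (φ (Lm j)) (φ L)
  linarith

end ChExists

section ChRiemann

variable {F : ℝ → (X →L[ℝ] X)} {M a : ℝ} {t : ℝ} {gk : ℕ → ℕ}

lemma ch_rho_meas (χ : StrongDual ℝ X) (z : X) (t : ℝ) (gk : ℕ → ℕ) (k : ℕ) :
    Measurable (fun σ : ℝ => χ ((chA F t gk σ k) z)) := by
  have h1 : Measurable fun σ : ℝ => ((gk k : ℝ) * σ / t) :=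
    (measurable_id.const_mul ((gk k : ℝ))).div_const t
  have h2 : Measurable fun σ : ℝ => (⌊(gk k : ℝ) * σ / t⌋₊ : ℕ) :=
    Nat.measurable_floor.comp h1
  have h3 : Measurable fun m : ℕ => χ (((F (t / (gk k : ℝ))) ^ m) z) :=
    measurable_from_nat
  exact h3.comp h2

lemma ch_rho_bound (hMF : MemFClass F M a) (hM : 1 ≤ M) (ht : 0 < t)
    (χ : StrongDual ℝ X) (z : X) {c : ℝ} (k : ℕ) {σ : ℝ}
    (hσ : σ ∈ Set.Icc (0:ℝ) c) :
    |χ ((chA F t gk σ k) z)| ≤ ‖χ‖ * (M * Real.exp (max a 0 * c) * ‖z‖) := by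
  calc |χ ((chA F t gk σ k) z)| ≤ ‖χ‖ * ‖(chA F t gk σ k) z‖ := χ.le_opNorm _
    _ ≤ ‖χ‖ * (M * Real.exp (max a 0 * c) * ‖z‖) := by
        refine mul_le_mul_of_nonneg_left ?_ (norm_nonneg χ)
        calc ‖(chA F t gk σ k) z‖ ≤ ‖chA F t gk σ k‖ * ‖z‖ := (chA F t gk σ k).le_opNorm z
          _ ≤ M * Real.exp (max a 0 * c) * ‖z‖ :=
              mul_le_mul_of_nonneg_right (chA_norm hMF hM ht hσ.1 hσ.2 k) (norm_nonneg z)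

lemma ch_rho_intable (hMF : MemFClass F M a) (hM : 1 ≤ M) (ht : 0 < t)
    (χ : StrongDual ℝ X) (z : X) {c : ℝ} (k : ℕ) {u v : ℝ}
    (hu : u ∈ Set.Icc (0:ℝ) c) (hv : v ∈ Set.Icc (0:ℝ) c) :
    IntervalIntegrable (fun σ => χ ((chA F t gk σ k) z)) volume u v := by
  rw [intervalIntegrable_iff]
  have hsub : Set.uIoc u v ⊆ Set.Icc (0:ℝ) c := fun σ hσ =>
    Set.uIcc_subset_Icc hu hv (Set.Ioc_subset_Icc_self hσ)
  refine Measure.integrableOn_of_bounded (M := ‖χ‖ * (M * Real.exp (max a 0 * c) * ‖z‖))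
    ?_ ((ch_rho_meas χ z t gk k).aestronglyMeasurable) ?_
  · exact (measure_Ioc_lt_top).ne
  · refine (ae_restrict_iff' measurableSet_uIoc).2 (ae_of_all _ fun σ hσ => ?_)
    rw [Real.norm_eq_abs]
    exact ch_rho_bound hMF hM ht χ z k (hsub hσ)

lemma ch_grid (hMF : MemFClass F M a) (hM : 1 ≤ M) (ht : 0 < t)
    (χ : StrongDual ℝ X) (z : X) {c : ℝ} (hc : 0 ≤ c) (k : ℕ) (hn : 0 < gk k)
    {m₁ m₂ : ℕ} (h12 : m₁ ≤ m₂) (hm₂ : (m₂ : ℝ) * t ≤ (gk k : ℝ) * c) :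
    ∫ σ in ((m₁ : ℝ) * (t / (gk k : ℝ)))..((m₂ : ℝ) * (t / (gk k : ℝ))),
        χ ((chA F t gk σ k) z)
      = ∑ j ∈ Finset.Ico m₁ m₂, (t / (gk k : ℝ)) * χ (((F (t / (gk k : ℝ))) ^ j) z) := by
  have hnR : (0:ℝ) < (gk k : ℝ) := by exact_mod_cast hn
  set h : ℝ := t / (gk k : ℝ) with hh
  have hhpos : 0 < h := by positivity
  have hend : ∀ j : ℕ, j ≤ m₂ → ((j : ℝ) * h) ∈ Set.Icc (0:ℝ) c := by
    intro j hj
    constructor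
    · positivity
    · have h1 : (j:ℝ) * h ≤ (m₂:ℝ) * h := by
        have : (j:ℝ) ≤ (m₂:ℝ) := by exact_mod_cast hj
        exact mul_le_mul_of_nonneg_right this hhpos.le
      have h2 : (m₂:ℝ) * h ≤ c := by
        rw [hh, mul_div_assoc'] at *
        rw [div_le_iff₀ hnR]
        linarith [hm₂]
      linarith
  have hint : ∀ j ∈ Set.Ico m₁ m₂,
      IntervalIntegrable (fun σ => χ ((chA F t gk σ k) z)) volume
        ((j:ℝ) * h) (((j+1 : ℕ):ℝ) * h) := by
    intro j hj
    have hj2 := hj.2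
    exact ch_rho_intable hMF hM ht χ z k (hend j (by omega)) (hend (j+1) (by omega))
  have hmain := intervalIntegral.sum_integral_adjacent_intervals_Ico
    (a := fun j : ℕ => (j : ℝ) * h) h12 hint
  rw [← hmain]
  refine Finset.sum_congr rfl fun j hj => ?_
  -- each piece
  have hle : (j:ℝ) * h ≤ ((j+1 : ℕ):ℝ) * h := by
    have : ((j:ℕ):ℝ) ≤ ((j+1 : ℕ):ℝ) := by exact_mod_cast Nat.le_succ j
    exact mul_le_mul_of_nonneg_right this hhpos.le
  have hne : ∀ᵐ σ : ℝ, σ ≠ ((j+1 : ℕ):ℝ) * h := by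
    rw [ae_iff]
    have : {σ : ℝ | ¬ σ ≠ ((j+1 : ℕ):ℝ) * h} = {(((j+1 : ℕ):ℝ) * h)} := by
      ext σ; simp
    rw [this]
    exact measure_singleton _
  have hae : ∀ᵐ σ : ℝ, σ ∈ Set.uIoc ((j:ℝ) * h) (((j+1 : ℕ):ℝ) * h) →
      χ ((chA F t gk σ k) z) = χ (((F (t / (gk k : ℝ))) ^ j) z) := by
    refine hne.mono fun σ hσne hσ => ?_
    rw [Set.uIoc_of_le hle] at hσ
    have hσ1 : (j:ℝ) * h < σ := hσ.1
    have hσ2 : σ < ((j+1 : ℕ):ℝ) * h := lt_of_le_of_ne hσ.2 hσne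
    have hσ0 : (0:ℝ) < σ := lt_of_le_of_lt (by positivity) hσ1
    have hσpos : (0:ℝ) ≤ (gk k : ℝ) * σ / t := by positivity
    have hfloor : ⌊(gk k : ℝ) * σ / t⌋₊ = j := by
      rw [Nat.floor_eq_iff hσpos]
      constructor
      · rw [le_div_iff₀ ht]
        have hmul := mul_lt_mul_of_pos_right hσ1 hnR
        have hjt : (j:ℝ) * h * (gk k : ℝ) = (j:ℝ) * t := by
          rw [hh]; field_simp
        calc (j:ℝ) * t = (j:ℝ) * h * (gk k : ℝ) := hjt.symm
          _ ≤ σ * (gk k : ℝ) := hmul.le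
          _ = (gk k : ℝ) * σ := by ring
      · rw [div_lt_iff₀ ht]
        have hmul := mul_lt_mul_of_pos_right hσ2 hnR
        have hjt : ((j+1 : ℕ):ℝ) * h * (gk k : ℝ) = ((j:ℝ) + 1) * t := by
          rw [hh]; push_cast; field_simp
        calc (gk k : ℝ) * σ = σ * (gk k : ℝ) := by ring
          _ < ((j+1 : ℕ):ℝ) * h * (gk k : ℝ) := hmul
          _ = ((j:ℝ) + 1) * t := hjt
    show χ (((F (t / (gk k : ℝ))) ^ (⌊(gk k : ℝ) * σ / t⌋₊)) z) = _
    rw [hfloor]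
  rw [intervalIntegral.integral_congr_ae hae, intervalIntegral.integral_const]
  rw [smul_eq_mul]
  have : ((j+1 : ℕ):ℝ) * h - (j:ℝ) * h = h := by push_cast; ring
  rw [this]

end ChRiemann

section ChRiemann2

variable {F : ℝ → (X →L[ℝ] X)} {M a : ℝ} {t : ℝ} {gk : ℕ → ℕ}

lemma ch_riemann (hMF : MemFClass F M a) (hM : 1 ≤ M) (ht : 0 < t) (hgk : StrictMono gk)
    {c : ℝ} (χ : StrongDual ℝ X) (z : X) (v : ℝ → ℝ)
    (hv : ∀ σ ∈ Set.Ico (0:ℝ) c, Tendsto (fun k => χ ((chA F t gk σ k) z)) atTop (𝓝 (v σ)))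
    {p r : ℝ} (hp : 0 ≤ p) (hpr : p ≤ r) (hr : r < c) :
    Tendsto (fun k => (t / (gk k : ℝ)) *
        ∑ j ∈ Finset.Ico (⌊(gk k : ℝ) * p / t⌋₊) (⌊(gk k : ℝ) * r / t⌋₊),
          χ (((F (t / (gk k : ℝ))) ^ j) z))
      atTop (𝓝 (∫ σ in p..r, v σ)) := by
  have hc : 0 < c := lt_of_le_of_lt (hp.trans hpr) hr
  have hrc : r ≤ c := hr.le
  have hpc : p ≤ c := hpr.trans hrc
  set Cρ : ℝ := ‖χ‖ * (M * Real.exp (max a 0 * c) * ‖z‖) with hCρ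
  have hCρ0 : 0 ≤ Cρ := by
    rw [hCρ]
    have h1 : (0:ℝ) ≤ M := by linarith
    positivity
  -- dominated convergence
  have hdct : Tendsto (fun k => ∫ σ in p..r, χ ((chA F t gk σ k) z)) atTop
      (𝓝 (∫ σ in p..r, v σ)) := by
    apply intervalIntegral.tendsto_integral_filter_of_dominated_convergence
      (bound := fun _ => Cρ)
    · exact Eventually.of_forall fun k => (ch_rho_meas χ z t gk k).aestronglyMeasurable
    · refine Eventually.of_forall fun k => ae_of_all _ fun σ hσ => ?_
      rw [Set.uIoc_of_le hpr] at hσ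
      rw [Real.norm_eq_abs]
      exact ch_rho_bound hMF hM ht χ z k (Set.mem_Icc.2 ⟨hp.trans hσ.1.le, hσ.2.trans hrc⟩)
    · exact intervalIntegrable_const
    · refine ae_of_all _ fun σ hσ => ?_
      rw [Set.uIoc_of_le hpr] at hσ
      exact hv σ (Set.mem_Ico.2 ⟨hp.trans hσ.1.le, lt_of_le_of_lt hσ.2 hr⟩)
  -- difference between the Riemann sum and the integral
  have hdiff : ∀ᶠ k in atTop, |(t / (gk k : ℝ)) *
      ∑ j ∈ Finset.Ico (⌊(gk k : ℝ) * p / t⌋₊) (⌊(gk k : ℝ) * r / t⌋₊),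
        χ (((F (t / (gk k : ℝ))) ^ j) z)
      - ∫ σ in p..r, χ ((chA F t gk σ k) z)| ≤ 2 * Cρ * (t / (gk k : ℝ)) := by
    filter_upwards [eventually_ge_atTop 1] with k hk1
    have hn : 0 < gk k := le_trans hk1 hgk.le_apply
    have hnR : (0:ℝ) < (gk k : ℝ) := by exact_mod_cast hn
    set h : ℝ := t / (gk k : ℝ) with hh
    have hhpos : 0 < h := by positivity
    set m₁ : ℕ := ⌊(gk k : ℝ) * p / t⌋₊ with hm₁
    set m₂ : ℕ := ⌊(gk k : ℝ) * r / t⌋₊ with hm₂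
    have h12 : m₁ ≤ m₂ := by
      refine Nat.floor_le_floor ?_
      gcongr
    have hm₂t : (m₂ : ℝ) * t ≤ (gk k : ℝ) * c := ch_floor_mul_le ht (hp.trans hpr) hrc
    have hm₁h : (m₁ : ℝ) * h ≤ p := by
      have h1 : (m₁ : ℝ) ≤ (gk k : ℝ) * p / t := Nat.floor_le (by positivity)
      rw [hh]
      calc (m₁ : ℝ) * (t / (gk k : ℝ)) ≤ ((gk k : ℝ) * p / t) * (t / (gk k : ℝ)) := by
            exact mul_le_mul_of_nonneg_right h1 (by positivity)
        _ = p := by field_simp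
    have hm₂h : (m₂ : ℝ) * h ≤ r := by
      have h1 : (m₂ : ℝ) ≤ (gk k : ℝ) * r / t :=
        Nat.floor_le (div_nonneg (mul_nonneg hnR.le (hp.trans hpr)) ht.le)
      rw [hh]
      calc (m₂ : ℝ) * (t / (gk k : ℝ)) ≤ ((gk k : ℝ) * r / t) * (t / (gk k : ℝ)) := by
            exact mul_le_mul_of_nonneg_right h1 (by positivity)
        _ = r := by field_simp
    have hm₁h2 : p < (m₁ : ℝ) * h + h := by
      have h1 : (gk k : ℝ) * p / t < (m₁ : ℝ) + 1 := Nat.lt_floor_add_one _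
      have h2 := mul_lt_mul_of_pos_right h1 hhpos
      rw [hh] at h2 ⊢
      calc p = ((gk k : ℝ) * p / t) * (t / (gk k : ℝ)) := by field_simp
        _ < ((m₁ : ℝ) + 1) * (t / (gk k : ℝ)) := h2
        _ = (m₁ : ℝ) * (t / (gk k : ℝ)) + t / (gk k : ℝ) := by ring
    have hm₂h2 : r < (m₂ : ℝ) * h + h := by
      have h1 : (gk k : ℝ) * r / t < (m₂ : ℝ) + 1 := Nat.lt_floor_add_one _
      have h2 := mul_lt_mul_of_pos_right h1 hhpos
      rw [hh] at h2 ⊢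
      calc r = ((gk k : ℝ) * r / t) * (t / (gk k : ℝ)) := by field_simp
        _ < ((m₂ : ℝ) + 1) * (t / (gk k : ℝ)) := h2
        _ = (m₂ : ℝ) * (t / (gk k : ℝ)) + t / (gk k : ℝ) := by ring
    have hm₁0 : (0:ℝ) ≤ (m₁ : ℝ) * h := by positivity
    have hm₁Icc : (m₁ : ℝ) * h ∈ Set.Icc (0:ℝ) c := ⟨hm₁0, (hm₁h.trans hpc)⟩
    have hm₂Icc : (m₂ : ℝ) * h ∈ Set.Icc (0:ℝ) c := ⟨by positivity, (hm₂h.trans hrc)⟩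
    have hpIcc : p ∈ Set.Icc (0:ℝ) c := ⟨hp, hpc⟩
    have hrIcc : r ∈ Set.Icc (0:ℝ) c := ⟨hp.trans hpr, hrc⟩
    have hgrid := ch_grid hMF hM ht χ z hc.le k hn h12 hm₂t
    -- grid sum equals h * sum
    have hsum_eq : (t / (gk k : ℝ)) *
        ∑ j ∈ Finset.Ico m₁ m₂, χ (((F (t / (gk k : ℝ))) ^ j) z)
        = ∫ σ in ((m₁ : ℝ) * h)..((m₂ : ℝ) * h), χ ((chA F t gk σ k) z) := by
      rw [hgrid, Finset.mul_sum]
    -- decompose the integrals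
    have hI1 : IntervalIntegrable (fun σ => χ ((chA F t gk σ k) z)) volume
        ((m₁ : ℝ) * h) p := ch_rho_intable hMF hM ht χ z k hm₁Icc hpIcc
    have hI2 : IntervalIntegrable (fun σ => χ ((chA F t gk σ k) z)) volume
        p ((m₂ : ℝ) * h) := ch_rho_intable hMF hM ht χ z k hpIcc hm₂Icc
    have hI3 : IntervalIntegrable (fun σ => χ ((chA F t gk σ k) z)) volume
        ((m₂ : ℝ) * h) r := ch_rho_intable hMF hM ht χ z k hm₂Icc hrIcc
    have hsplit1 : ∫ σ in ((m₁ : ℝ) * h)..((m₂ : ℝ) * h), χ ((chA F t gk σ k) z)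
        = (∫ σ in ((m₁ : ℝ) * h)..p, χ ((chA F t gk σ k) z))
          + ∫ σ in p..((m₂ : ℝ) * h), χ ((chA F t gk σ k) z) :=
      (intervalIntegral.integral_add_adjacent_intervals hI1 hI2).symm
    have hsplit2 : ∫ σ in p..r, χ ((chA F t gk σ k) z)
        = (∫ σ in p..((m₂ : ℝ) * h), χ ((chA F t gk σ k) z))
          + ∫ σ in ((m₂ : ℝ) * h)..r, χ ((chA F t gk σ k) z) :=
      (intervalIntegral.integral_add_adjacent_intervals hI2 hI3).symm
    -- tail bounds
    have htail1 : |∫ σ in ((m₁ : ℝ) * h)..p, χ ((chA F t gk σ k) z)| ≤ Cρ * h := by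
      have hb : ∀ σ ∈ Set.uIoc ((m₁ : ℝ) * h) p, ‖χ ((chA F t gk σ k) z)‖ ≤ Cρ := by
        intro σ hσ
        rw [Set.uIoc_of_le hm₁h] at hσ
        rw [Real.norm_eq_abs]
        exact ch_rho_bound hMF hM ht χ z k
          (Set.mem_Icc.2 ⟨hm₁0.trans hσ.1.le, hσ.2.trans hpc⟩)
      have := intervalIntegral.norm_integral_le_of_norm_le_const hb
      rw [Real.norm_eq_abs] at this
      refine this.trans ?_
      have : |p - (m₁ : ℝ) * h| ≤ h := by
        rw [abs_of_nonneg (by linarith)]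
        linarith
      exact mul_le_mul_of_nonneg_left this hCρ0
    have htail2 : |∫ σ in ((m₂ : ℝ) * h)..r, χ ((chA F t gk σ k) z)| ≤ Cρ * h := by
      have hb : ∀ σ ∈ Set.uIoc ((m₂ : ℝ) * h) r, ‖χ ((chA F t gk σ k) z)‖ ≤ Cρ := by
        intro σ hσ
        rw [Set.uIoc_of_le hm₂h] at hσ
        rw [Real.norm_eq_abs]
        refine ch_rho_bound hMF hM ht χ z k
          (Set.mem_Icc.2 ⟨le_trans (by positivity) hσ.1.le, hσ.2.trans hrc⟩)
      have := intervalIntegral.norm_integral_le_of_norm_le_const hb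
      rw [Real.norm_eq_abs] at this
      refine this.trans ?_
      have : |r - (m₂ : ℝ) * h| ≤ h := by
        rw [abs_of_nonneg (by linarith)]
        linarith
      exact mul_le_mul_of_nonneg_left this hCρ0
    rw [hsum_eq, hsplit1]
    have heq : (∫ σ in ((m₁ : ℝ) * h)..p, χ ((chA F t gk σ k) z))
          + (∫ σ in p..((m₂ : ℝ) * h), χ ((chA F t gk σ k) z))
          - ∫ σ in p..r, χ ((chA F t gk σ k) z)
        = (∫ σ in ((m₁ : ℝ) * h)..p, χ ((chA F t gk σ k) z))
          - ∫ σ in ((m₂ : ℝ) * h)..r, χ ((chA F t gk σ k) z) := by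
      rw [hsplit2]; ring
    rw [heq]
    calc |(∫ σ in ((m₁ : ℝ) * h)..p, χ ((chA F t gk σ k) z))
          - ∫ σ in ((m₂ : ℝ) * h)..r, χ ((chA F t gk σ k) z)|
        ≤ |∫ σ in ((m₁ : ℝ) * h)..p, χ ((chA F t gk σ k) z)|
          + |∫ σ in ((m₂ : ℝ) * h)..r, χ ((chA F t gk σ k) z)| := abs_sub _ _
      _ ≤ Cρ * h + Cρ * h := add_le_add htail1 htail2
      _ = 2 * Cρ * h := by ring
  -- squeeze
  have hzero : Tendsto (fun k => (t / (gk k : ℝ)) *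
      (∑ j ∈ Finset.Ico (⌊(gk k : ℝ) * p / t⌋₊) (⌊(gk k : ℝ) * r / t⌋₊),
        χ (((F (t / (gk k : ℝ))) ^ j) z))
      - ∫ σ in p..r, χ ((chA F t gk σ k) z)) atTop (𝓝 0) := by
    refine squeeze_zero_norm' (a := fun k => 2 * Cρ * (t / (gk k : ℝ))) ?_ ?_
    · filter_upwards [hdiff] with k hk
      rw [Real.norm_eq_abs]
      exact hk
    · have h0 : Tendsto (fun k => t / (gk k : ℝ)) atTop (𝓝 0) :=
        (ch_tendsto_h0 ht hgk).mono_right nhdsWithin_le_nhds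
      have := h0.const_mul (2 * Cρ)
      simpa using this
  have := hzero.add hdct
  simp only [sub_add_cancel, zero_add] at this
  exact this

end ChRiemann2

section ChScalar

variable {F : ℝ → (X →L[ℝ] X)} {M a : ℝ} {t : ℝ} {gk : ℕ → ℕ}

lemma ch_adj_apply (T : X →L[ℝ] X) (φ : StrongDual ℝ X) (x : X) :
    adjCLM T φ x = φ (T x) := rfl

lemma ch_adj_one (φ : StrongDual ℝ X) : adjCLM (1 : X →L[ℝ] X) φ = φ :=
  ContinuousLinearMap.ext fun x => rfl

/-- Scalar integral identity for part (c). -/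
lemma ch_scalar_c (hMF : MemFClass F M a) (hM : 1 ≤ M) (ht : 0 < t) (hgk : StrictMono gk)
    {c : ℝ} {f y : X} (hf : DerivAtZero F f y)
    (φ : StrongDual ℝ X) (vf vy : ℝ → ℝ)
    (hvf : ∀ σ ∈ Set.Ico (0:ℝ) c, Tendsto (fun k => φ ((chA F t gk σ k) f)) atTop (𝓝 (vf σ)))
    (hvy : ∀ σ ∈ Set.Ico (0:ℝ) c, Tendsto (fun k => φ ((chA F t gk σ k) y)) atTop (𝓝 (vy σ)))
    {p r : ℝ} (hp : 0 ≤ p) (hpr : p ≤ r) (hr : r < c) :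
    vf r - vf p = ∫ σ in p..r, vy σ := by
  have hc : 0 < c := lt_of_le_of_lt (hp.trans hpr) hr
  set B : ℝ := M * Real.exp (max a 0 * c) with hB
  have hB1 : (1:ℝ) ≤ B := by
    have : (1:ℝ) ≤ Real.exp (max a 0 * c) := by rw [Real.one_le_exp_iff]; positivity
    nlinarith
  have hB0 : (0:ℝ) ≤ B := by linarith
  set e : ℕ → X := fun k => ((t / (gk k : ℝ))⁻¹ • (F (t / (gk k : ℝ)) f - F 0 f)) - y with he
  have he0 : Tendsto (fun k => ‖e k‖) atTop (𝓝 0) := by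
    have h1 := hf.comp (ch_tendsto_h0 ht hgk)
    have h3 : Tendsto (fun k => ‖e k‖) atTop (𝓝 ‖y - y‖) := (h1.sub_const y).norm
    rw [sub_self, norm_zero] at h3
    exact h3
  have hriem := ch_riemann hMF hM ht hgk φ y vy hvy hp hpr hr
  have herr : Tendsto (fun k => (t / (gk k : ℝ)) *
      ∑ j ∈ Finset.Ico (⌊(gk k : ℝ) * p / t⌋₊) (⌊(gk k : ℝ) * r / t⌋₊),
        φ (((F (t / (gk k : ℝ))) ^ j) (e k))) atTop (𝓝 0) := by
    refine squeeze_zero_norm' (a := fun k => (c * (‖φ‖ * B)) * ‖e k‖) ?_ ?_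
    · filter_upwards [eventually_ge_atTop 1] with k hk1
      have hn : 0 < gk k := le_trans hk1 hgk.le_apply
      have hnR : (0:ℝ) < (gk k : ℝ) := by exact_mod_cast hn
      have hhpos : (0:ℝ) < t / (gk k : ℝ) := by positivity
      set m₁ : ℕ := ⌊(gk k : ℝ) * p / t⌋₊ with hm₁
      set m₂ : ℕ := ⌊(gk k : ℝ) * r / t⌋₊ with hm₂
      have hjb : ∀ j ∈ Finset.Ico m₁ m₂,
          |φ (((F (t / (gk k : ℝ))) ^ j) (e k))| ≤ ‖φ‖ * (B * ‖e k‖) := by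
        intro j hj
        have hjm : j ≤ m₂ := (Finset.mem_Ico.1 hj).2.le
        have hpow : ‖(F (t / (gk k : ℝ))) ^ j‖ ≤ B := by
          apply ch_pow_norm hMF hM ht hc.le
          have h1 : ((j : ℝ)) * t ≤ ((m₂ : ℝ)) * t := by
            have : (j:ℝ) ≤ (m₂:ℝ) := by exact_mod_cast hjm
            nlinarith
          exact h1.trans (ch_floor_mul_le ht (hp.trans hpr) hr.le)
        calc |φ (((F (t / (gk k : ℝ))) ^ j) (e k))|
            ≤ ‖φ‖ * ‖((F (t / (gk k : ℝ))) ^ j) (e k)‖ := φ.le_opNorm _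
          _ ≤ ‖φ‖ * (B * ‖e k‖) := by
              refine mul_le_mul_of_nonneg_left ?_ (norm_nonneg φ)
              calc ‖((F (t / (gk k : ℝ))) ^ j) (e k)‖
                  ≤ ‖(F (t / (gk k : ℝ))) ^ j‖ * ‖e k‖ :=
                    ((F (t / (gk k : ℝ))) ^ j).le_opNorm _
                _ ≤ B * ‖e k‖ := mul_le_mul_of_nonneg_right hpow (norm_nonneg _)
      have hsum : |∑ j ∈ Finset.Ico m₁ m₂, φ (((F (t / (gk k : ℝ))) ^ j) (e k))|
          ≤ (m₂ - m₁ : ℕ) * (‖φ‖ * (B * ‖e k‖)) := by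
        refine (Finset.abs_sum_le_sum_abs _ _).trans ?_
        have h2 := Finset.sum_le_card_nsmul (Finset.Ico m₁ m₂) _ _ hjb
        rwa [Nat.card_Ico, nsmul_eq_mul] at h2
      have hcardh : ((m₂ - m₁ : ℕ) : ℝ) * (t / (gk k : ℝ)) ≤ c := by
        have h1 : ((m₂ - m₁ : ℕ) : ℝ) ≤ (m₂ : ℝ) := by
          have : m₂ - m₁ ≤ m₂ := Nat.sub_le m₂ m₁
          exact_mod_cast this
        have h2 : (m₂ : ℝ) * (t / (gk k : ℝ)) ≤ c := by
          have h3 : (m₂ : ℝ) * t ≤ (gk k : ℝ) * c := ch_floor_mul_le ht (hp.trans hpr) hr.le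
          rw [mul_div_assoc'] at *
          rw [div_le_iff₀ hnR]
          linarith
        calc ((m₂ - m₁ : ℕ) : ℝ) * (t / (gk k : ℝ)) ≤ (m₂ : ℝ) * (t / (gk k : ℝ)) :=
              mul_le_mul_of_nonneg_right h1 hhpos.le
          _ ≤ c := h2
      rw [Real.norm_eq_abs, abs_mul, abs_of_pos hhpos]
      calc (t / (gk k : ℝ)) * |∑ j ∈ Finset.Ico m₁ m₂, φ (((F (t / (gk k : ℝ))) ^ j) (e k))|
          ≤ (t / (gk k : ℝ)) * ((m₂ - m₁ : ℕ) * (‖φ‖ * (B * ‖e k‖))) :=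
            mul_le_mul_of_nonneg_left hsum hhpos.le
        _ = (((m₂ - m₁ : ℕ) : ℝ) * (t / (gk k : ℝ))) * (‖φ‖ * (B * ‖e k‖)) := by ring
        _ ≤ c * (‖φ‖ * (B * ‖e k‖)) := by
            refine mul_le_mul_of_nonneg_right hcardh ?_
            positivity
        _ = (c * (‖φ‖ * B)) * ‖e k‖ := by ring
    · have := he0.const_mul (c * (‖φ‖ * B))
      simpa using this
  have hkey : ∀ᶠ k in atTop,
      (t / (gk k : ℝ)) * ∑ j ∈ Finset.Ico (⌊(gk k : ℝ) * p / t⌋₊) (⌊(gk k : ℝ) * r / t⌋₊),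
          φ (((F (t / (gk k : ℝ))) ^ j) y)
        + (t / (gk k : ℝ)) * ∑ j ∈ Finset.Ico (⌊(gk k : ℝ) * p / t⌋₊) (⌊(gk k : ℝ) * r / t⌋₊),
          φ (((F (t / (gk k : ℝ))) ^ j) (e k))
      = φ ((chA F t gk r k) f) - φ ((chA F t gk p k) f) := by
    filter_upwards [eventually_ge_atTop 1] with k hk1
    have hn : 0 < gk k := le_trans hk1 hgk.le_apply
    have hnR : (0:ℝ) < (gk k : ℝ) := by exact_mod_cast hn
    have hhpos : (0:ℝ) < t / (gk k : ℝ) := by positivity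
    have hhne : (t / (gk k : ℝ)) ≠ 0 := ne_of_gt hhpos
    have hm12 : ⌊(gk k : ℝ) * p / t⌋₊ ≤ ⌊(gk k : ℝ) * r / t⌋₊ := by
      refine Nat.floor_le_floor ?_
      gcongr
    have hsplit : (F (t / (gk k : ℝ))) f - f
        = (t / (gk k : ℝ)) • y + (t / (gk k : ℝ)) • (e k) := by
      have h1 : (t / (gk k : ℝ)) • (e k)
          = (F (t / (gk k : ℝ))) f - f - (t / (gk k : ℝ)) • y := by
        show (t / (gk k : ℝ)) • (((t / (gk k : ℝ))⁻¹ • (F (t / (gk k : ℝ)) f - F 0 f)) - y) = _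
        rw [smul_sub, smul_inv_smul₀ hhne, hMF.1]
        simp [ContinuousLinearMap.one_apply]
      rw [h1]
      abel
    have htel := ch_telescope (F (t / (gk k : ℝ))) f hm12
    simp only [chA]
    rw [← map_sub φ, htel, map_sum]
    rw [Finset.mul_sum, Finset.mul_sum, ← Finset.sum_add_distrib]
    refine Finset.sum_congr rfl fun j hj => ?_
    rw [hsplit, map_add, _root_.map_smul, _root_.map_smul, map_add,
      _root_.map_smul, _root_.map_smul, smul_eq_mul, smul_eq_mul]
  have hlhs : Tendsto (fun k => φ ((chA F t gk r k) f) - φ ((chA F t gk p k) f))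
      atTop (𝓝 (vf r - vf p)) :=
    (hvf r ⟨hp.trans hpr, hr⟩).sub (hvf p ⟨hp, lt_of_le_of_lt hpr hr⟩)
  have hrhs : Tendsto (fun k => φ ((chA F t gk r k) f) - φ ((chA F t gk p k) f))
      atTop (𝓝 ((∫ σ in p..r, vy σ) + 0)) :=
    Tendsto.congr' hkey (hriem.add herr)
  have := tendsto_nhds_unique hlhs hrhs
  simpa using this

end ChScalar

section ChScalarD

variable {F : ℝ → (X →L[ℝ] X)} {M a : ℝ} {t : ℝ} {gk : ℕ → ℕ}

lemma ch_pow_comm (T : X →L[ℝ] X) (j : ℕ) (x : X) :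
    (T ^ j) (T x) = T ((T ^ j) x) := by
  rw [← ContinuousLinearMap.mul_apply, ← ContinuousLinearMap.mul_apply,
    ← pow_succ, ← pow_succ']

/-- Scalar integral identity for part (d). -/
lemma ch_scalar_d (hMF : MemFClass F M a) (hM : 1 ≤ M) (ht : 0 < t) (hgk : StrictMono gk)
    {c : ℝ} {f : X} {φ ψ : StrongDual ℝ X} (hadj : AdjDerivAtZero F φ ψ)
    (vφ vψ : ℝ → ℝ)
    (hvφ : ∀ σ ∈ Set.Ico (0:ℝ) c, Tendsto (fun k => φ ((chA F t gk σ k) f)) atTop (𝓝 (vφ σ)))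
    (hvψ : ∀ σ ∈ Set.Ico (0:ℝ) c, Tendsto (fun k => ψ ((chA F t gk σ k) f)) atTop (𝓝 (vψ σ)))
    {p r : ℝ} (hp : 0 ≤ p) (hpr : p ≤ r) (hr : r < c) :
    vφ r - vφ p = ∫ σ in p..r, vψ σ := by
  have hc : 0 < c := lt_of_le_of_lt (hp.trans hpr) hr
  set B : ℝ := M * Real.exp (max a 0 * c) with hB
  have hB1 : (1:ℝ) ≤ B := by
    have : (1:ℝ) ≤ Real.exp (max a 0 * c) := by rw [Real.one_le_exp_iff]; positivity
    nlinarith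
  have hB0 : (0:ℝ) ≤ B := by linarith
  set d : ℕ → StrongDual ℝ X := fun k =>
    ((t / (gk k : ℝ))⁻¹ • (adjCLM (F (t / (gk k : ℝ))) φ - adjCLM (F 0) φ)) - ψ with hd
  have hd0 : Tendsto (fun k => ‖d k‖) atTop (𝓝 0) := by
    have h1 := hadj.comp (ch_tendsto_h0 ht hgk)
    have h3 : Tendsto (fun k => ‖d k‖) atTop (𝓝 ‖ψ - ψ‖) := (h1.sub_const ψ).norm
    rw [sub_self, norm_zero] at h3
    exact h3
  have hriem := ch_riemann hMF hM ht hgk ψ f vψ hvψ hp hpr hr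
  have herr : Tendsto (fun k => (t / (gk k : ℝ)) *
      ∑ j ∈ Finset.Ico (⌊(gk k : ℝ) * p / t⌋₊) (⌊(gk k : ℝ) * r / t⌋₊),
        (d k) (((F (t / (gk k : ℝ))) ^ j) f)) atTop (𝓝 0) := by
    refine squeeze_zero_norm' (a := fun k => (c * (B * ‖f‖)) * ‖d k‖) ?_ ?_
    · filter_upwards [eventually_ge_atTop 1] with k hk1
      have hn : 0 < gk k := le_trans hk1 hgk.le_apply
      have hnR : (0:ℝ) < (gk k : ℝ) := by exact_mod_cast hn
      have hhpos : (0:ℝ) < t / (gk k : ℝ) := by positivity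
      set m₁ : ℕ := ⌊(gk k : ℝ) * p / t⌋₊ with hm₁
      set m₂ : ℕ := ⌊(gk k : ℝ) * r / t⌋₊ with hm₂
      have hjb : ∀ j ∈ Finset.Ico m₁ m₂,
          |(d k) (((F (t / (gk k : ℝ))) ^ j) f)| ≤ ‖d k‖ * (B * ‖f‖) := by
        intro j hj
        have hjm : j ≤ m₂ := (Finset.mem_Ico.1 hj).2.le
        have hpow : ‖(F (t / (gk k : ℝ))) ^ j‖ ≤ B := by
          apply ch_pow_norm hMF hM ht hc.le
          have h1 : ((j : ℝ)) * t ≤ ((m₂ : ℝ)) * t := by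
            have : (j:ℝ) ≤ (m₂:ℝ) := by exact_mod_cast hjm
            nlinarith
          exact h1.trans (ch_floor_mul_le ht (hp.trans hpr) hr.le)
        calc |(d k) (((F (t / (gk k : ℝ))) ^ j) f)|
            ≤ ‖d k‖ * ‖((F (t / (gk k : ℝ))) ^ j) f‖ := (d k).le_opNorm _
          _ ≤ ‖d k‖ * (B * ‖f‖) := by
              refine mul_le_mul_of_nonneg_left ?_ (norm_nonneg _)
              calc ‖((F (t / (gk k : ℝ))) ^ j) f‖
                  ≤ ‖(F (t / (gk k : ℝ))) ^ j‖ * ‖f‖ :=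
                    ((F (t / (gk k : ℝ))) ^ j).le_opNorm _
                _ ≤ B * ‖f‖ := mul_le_mul_of_nonneg_right hpow (norm_nonneg _)
      have hsum : |∑ j ∈ Finset.Ico m₁ m₂, (d k) (((F (t / (gk k : ℝ))) ^ j) f)|
          ≤ (m₂ - m₁ : ℕ) * (‖d k‖ * (B * ‖f‖)) := by
        refine (Finset.abs_sum_le_sum_abs _ _).trans ?_
        have h2 := Finset.sum_le_card_nsmul (Finset.Ico m₁ m₂) _ _ hjb
        rwa [Nat.card_Ico, nsmul_eq_mul] at h2
      have hcardh : ((m₂ - m₁ : ℕ) : ℝ) * (t / (gk k : ℝ)) ≤ c := by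
        have h1 : ((m₂ - m₁ : ℕ) : ℝ) ≤ (m₂ : ℝ) := by
          have : m₂ - m₁ ≤ m₂ := Nat.sub_le m₂ m₁
          exact_mod_cast this
        have h2 : (m₂ : ℝ) * (t / (gk k : ℝ)) ≤ c := by
          have h3 : (m₂ : ℝ) * t ≤ (gk k : ℝ) * c := ch_floor_mul_le ht (hp.trans hpr) hr.le
          rw [mul_div_assoc'] at *
          rw [div_le_iff₀ hnR]
          linarith
        calc ((m₂ - m₁ : ℕ) : ℝ) * (t / (gk k : ℝ)) ≤ (m₂ : ℝ) * (t / (gk k : ℝ)) :=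
              mul_le_mul_of_nonneg_right h1 hhpos.le
          _ ≤ c := h2
      rw [Real.norm_eq_abs, abs_mul, abs_of_pos hhpos]
      calc (t / (gk k : ℝ)) * |∑ j ∈ Finset.Ico m₁ m₂, (d k) (((F (t / (gk k : ℝ))) ^ j) f)|
          ≤ (t / (gk k : ℝ)) * ((m₂ - m₁ : ℕ) * (‖d k‖ * (B * ‖f‖))) :=
            mul_le_mul_of_nonneg_left hsum hhpos.le
        _ = (((m₂ - m₁ : ℕ) : ℝ) * (t / (gk k : ℝ))) * (‖d k‖ * (B * ‖f‖)) := by ring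
        _ ≤ c * (‖d k‖ * (B * ‖f‖)) := by
            refine mul_le_mul_of_nonneg_right hcardh ?_
            positivity
        _ = (c * (B * ‖f‖)) * ‖d k‖ := by ring
    · have := hd0.const_mul (c * (B * ‖f‖))
      simpa using this
  have hkey : ∀ᶠ k in atTop,
      (t / (gk k : ℝ)) * ∑ j ∈ Finset.Ico (⌊(gk k : ℝ) * p / t⌋₊) (⌊(gk k : ℝ) * r / t⌋₊),
          ψ (((F (t / (gk k : ℝ))) ^ j) f)
        + (t / (gk k : ℝ)) * ∑ j ∈ Finset.Ico (⌊(gk k : ℝ) * p / t⌋₊) (⌊(gk k : ℝ) * r / t⌋₊),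
          (d k) (((F (t / (gk k : ℝ))) ^ j) f)
      = φ ((chA F t gk r k) f) - φ ((chA F t gk p k) f) := by
    filter_upwards [eventually_ge_atTop 1] with k hk1
    have hn : 0 < gk k := le_trans hk1 hgk.le_apply
    have hnR : (0:ℝ) < (gk k : ℝ) := by exact_mod_cast hn
    have hhpos : (0:ℝ) < t / (gk k : ℝ) := by positivity
    have hhne : (t / (gk k : ℝ)) ≠ 0 := ne_of_gt hhpos
    have hm12 : ⌊(gk k : ℝ) * p / t⌋₊ ≤ ⌊(gk k : ℝ) * r / t⌋₊ := by
      refine Nat.floor_le_floor ?_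
      gcongr
    have hsplit : adjCLM (F (t / (gk k : ℝ))) φ - φ
        = (t / (gk k : ℝ)) • ψ + (t / (gk k : ℝ)) • (d k) := by
      have h1 : (t / (gk k : ℝ)) • (d k)
          = adjCLM (F (t / (gk k : ℝ))) φ - φ - (t / (gk k : ℝ)) • ψ := by
        show (t / (gk k : ℝ)) • (((t / (gk k : ℝ))⁻¹ •
          (adjCLM (F (t / (gk k : ℝ))) φ - adjCLM (F 0) φ)) - ψ) = _
        rw [smul_sub, smul_inv_smul₀ hhne, hMF.1, ch_adj_one]
      rw [h1]
      abel
    have htel := ch_telescope (F (t / (gk k : ℝ))) f hm12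
    simp only [chA]
    rw [← map_sub φ, htel, map_sum]
    rw [Finset.mul_sum, Finset.mul_sum, ← Finset.sum_add_distrib]
    refine Finset.sum_congr rfl fun j hj => ?_
    have h1 : ((F (t / (gk k : ℝ))) ^ j) ((F (t / (gk k : ℝ))) f - f)
        = (F (t / (gk k : ℝ))) (((F (t / (gk k : ℝ))) ^ j) f)
          - ((F (t / (gk k : ℝ))) ^ j) f := by
      rw [map_sub, ch_pow_comm]
    rw [h1, map_sub]
    have h2 : φ ((F (t / (gk k : ℝ))) (((F (t / (gk k : ℝ))) ^ j) f))
        = (adjCLM (F (t / (gk k : ℝ))) φ) (((F (t / (gk k : ℝ))) ^ j) f) := rfl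
    rw [h2]
    have h3 : (adjCLM (F (t / (gk k : ℝ))) φ) (((F (t / (gk k : ℝ))) ^ j) f)
          - φ (((F (t / (gk k : ℝ))) ^ j) f)
        = (adjCLM (F (t / (gk k : ℝ))) φ - φ) (((F (t / (gk k : ℝ))) ^ j) f) := by
      rw [ContinuousLinearMap.sub_apply]
    rw [h3, hsplit, ContinuousLinearMap.add_apply, ContinuousLinearMap.smul_apply,
      ContinuousLinearMap.smul_apply, smul_eq_mul, smul_eq_mul]
  have hlhs : Tendsto (fun k => φ ((chA F t gk r k) f) - φ ((chA F t gk p k) f))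
      atTop (𝓝 (vφ r - vφ p)) :=
    (hvφ r ⟨hp.trans hpr, hr⟩).sub (hvφ p ⟨hp, lt_of_le_of_lt hpr hr⟩)
  have hrhs : Tendsto (fun k => φ ((chA F t gk r k) f) - φ ((chA F t gk p k) f))
      atTop (𝓝 ((∫ σ in p..r, vψ σ) + 0)) :=
    Tendsto.congr' hkey (hriem.add herr)
  have := tendsto_nhds_unique hlhs hrhs
  simpa using this

end ChScalarD

section ChFTC

variable {F : ℝ → (X →L[ℝ] X)} {M a : ℝ} {t : ℝ} {gk : ℕ → ℕ}

lemma ch_ftc {E : Type*} [NormedAddCommGroup E] [NormedSpace ℝ E] [CompleteSpace E]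
    {l : ℝ} {u : ℝ → E} (hu : ContinuousOn u (Set.Ico (0:ℝ) l))
    (C : E) {s : ℝ} (hs : s ∈ Set.Ico (0:ℝ) l) :
    HasDerivWithinAt (fun r => C + ∫ σ in (0:ℝ)..r, u σ) (u s) (Set.Ico (0:ℝ) l) s := by
  set b : ℝ := (s + l) / 2 with hb
  have hsl : s < l := hs.2
  have hs0 : (0:ℝ) ≤ s := hs.1
  have hsb : s < b := by rw [hb]; linarith
  have hbl : b < l := by rw [hb]; linarith
  have hb0 : (0:ℝ) ≤ b := by rw [hb]; linarith
  have hsubset : Set.Icc (0:ℝ) b ⊆ Set.Ico (0:ℝ) l :=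
    fun x hx => ⟨hx.1, lt_of_le_of_lt hx.2 hbl⟩
  haveI : Fact (s ∈ Set.Icc (0:ℝ) b) := ⟨⟨hs0, hsb.le⟩⟩
  have hint : IntervalIntegrable u volume 0 s := by
    apply ContinuousOn.intervalIntegrable
    rw [Set.uIcc_of_le hs0]
    exact hu.mono fun x hx => ⟨hx.1, lt_of_le_of_lt hx.2 hsl⟩
  have hmeas : StronglyMeasurableAtFilter u (𝓝[Set.Icc (0:ℝ) b] s) volume :=
    (hu.mono hsubset).stronglyMeasurableAtFilter_nhdsWithin measurableSet_Icc s
  have hcw : ContinuousWithinAt u (Set.Icc (0:ℝ) b) s := (hu s hs).mono hsubset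
  have hftc := intervalIntegral.integral_hasDerivWithinAt_right
    (s := Set.Icc (0:ℝ) b) (t := Set.Icc (0:ℝ) b) hint hmeas hcw
  have h2 := hftc.const_add C
  refine h2.mono_of_mem_nhdsWithin ?_
  have h1 : Set.Iio b ∈ 𝓝 s := Iio_mem_nhds hsb
  have h3 := inter_mem_nhdsWithin (Set.Ico (0:ℝ) l) h1
  refine Filter.mem_of_superset h3 ?_
  rintro x ⟨hx1, hx2⟩
  exact ⟨hx1.1, le_of_lt hx2⟩

lemma ch_adjadj (hMF : MemFClass F M a) :
    ∀ g z : X, DerivAtZero F g z → AdjAdjRel F g z := by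
  intro g z hgz φ ψ hφψ
  have h1 : Tendsto (fun h : ℝ => (h⁻¹ • (adjCLM (F h) φ - adjCLM (F 0) φ)) g)
      (𝓝[>] (0:ℝ)) (𝓝 (ψ g)) :=
    ((ContinuousLinearMap.apply ℝ ℝ g).continuous.tendsto ψ).comp hφψ
  have h2 : Tendsto (fun h : ℝ => (h⁻¹ • (adjCLM (F h) φ - adjCLM (F 0) φ)) g)
      (𝓝[>] (0:ℝ)) (𝓝 (φ z)) := by
    have h3 : Tendsto (fun h : ℝ => φ (h⁻¹ • (F h g - F 0 g))) (𝓝[>] (0:ℝ)) (𝓝 (φ z)) :=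
      (φ.continuous.tendsto z).comp hgz
    refine h3.congr fun h => ?_
    rw [_root_.map_smul, map_sub, ContinuousLinearMap.smul_apply,
      ContinuousLinearMap.sub_apply, ch_adj_apply, ch_adj_apply]
  exact tendsto_nhds_unique h1 h2

end ChFTC

/-- Lemma 6: extension of the weak limits from `Φ` and rational times to
the closed span of `Φ` and all times in `[0, l)`, together with properties (a)–(f). -/
theorem chernoff_lemma6 (F : ℝ → (X →L[ℝ] X)) (hF : MemF F)
    (t l : ℝ) (ht : 0 < t) (hl : 0 < l) (Φ : Set X)
    (gk : ℕ → ℕ) (hgk : StrictMono gk)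
    (hlim : ∀ g ∈ Φ, ∀ q : ℚ, 0 ≤ (q : ℝ) → (q : ℝ) < l →
      ∃ L : X, ∀ φ : StrongDual ℝ X,
        Tendsto (fun k : ℕ => φ (((F (t / (gk k))) ^ ⌊(gk k : ℝ) * (q : ℝ)⌋₊) g))
          atTop (𝓝 (φ L))) :
    -- the weak limit exists on the closed span for all `s ∈ [0, l)`
    (∀ g ∈ closedSpan Φ, ∀ s ∈ Set.Ico (0 : ℝ) l,
      ∃ L : X, ∀ φ : StrongDual ℝ X,
        Tendsto (fun k : ℕ => φ (((F (t / (gk k))) ^ ⌊(gk k : ℝ) * s⌋₊) g))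
          atTop (𝓝 (φ L))) ∧
    -- properties of the limit family `T_s`
    (∀ T : ℝ → X → X,
      (∀ s ∈ Set.Ico (0 : ℝ) l, ∀ g ∈ closedSpan Φ, ∀ φ : StrongDual ℝ X,
        Tendsto (fun k : ℕ => φ (((F (t / (gk k))) ^ ⌊(gk k : ℝ) * (s / t)⌋₊) g))
          atTop (𝓝 (φ (T s g)))) →
      -- (a) linearity and exponential bound
      ((∀ s ∈ Set.Ico (0 : ℝ) l, ∀ g₁ ∈ closedSpan Φ, ∀ g₂ ∈ closedSpan Φ,
          T s (g₁ + g₂) = T s g₁ + T s g₂) ∧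
        (∀ s ∈ Set.Ico (0 : ℝ) l, ∀ (c : ℝ), ∀ g ∈ closedSpan Φ, T s (c • g) = c • T s g) ∧
        (∃ M, 1 ≤ M ∧ ∃ a : ℝ, ∀ s ∈ Set.Ico (0 : ℝ) l, ∀ g ∈ closedSpan Φ,
          ‖T s g‖ ≤ M * Real.exp (a * s) * ‖g‖)) ∧
      -- (b) continuity in `s`
      (∀ g ∈ closedSpan Φ, ContinuousOn (fun s => T s g) (Set.Ico (0 : ℝ) l)) ∧
      -- (c) differentiability in `s`
      (∀ f ∈ closedSpan Φ, ∀ y : X, DerivAtZero F f y → y ∈ closedSpan Φ →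
        ∀ s ∈ Set.Ico (0 : ℝ) l,
          HasDerivWithinAt (fun r => T r f) (T s y) (Set.Ico (0 : ℝ) l) s) ∧
      -- (d) the integral identity
      (∀ φ ψ : StrongDual ℝ X, AdjDerivAtZero F φ ψ →
        ∀ m ∈ Set.Ico (0 : ℝ) l, ∀ p ∈ Set.Ico (0 : ℝ) l, ∀ f ∈ closedSpan Φ,
          φ (T m f) - φ (T p f) = ∫ s in p..m, ψ (T s f)) ∧
      -- (e) scalar differentiability through the adjoint derivative
      (∀ φ ψ : StrongDual ℝ X, AdjDerivAtZero F φ ψ →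
        ∀ f ∈ closedSpan Φ, ∀ s ∈ Set.Ico (0 : ℝ) l,
          HasDerivWithinAt (fun r => φ (T r f)) (ψ (T s f)) (Set.Ico (0 : ℝ) l) s) ∧
      -- (f) the adjoint of the adjoint derivative
      (Dense (StrongDual.toWeakDual ''
          {φ : StrongDual ℝ X | ∃ ψ, AdjDerivAtZero F φ ψ} : Set (WeakDual ℝ X)) →
        ∀ f ∈ closedSpan Φ, ∀ y : X, DerivAtZero F f y → y ∈ closedSpan Φ →
          ((∀ g z : X, DerivAtZero F g z → AdjAdjRel F g z) ∧
            ∀ s ∈ Set.Ico (0 : ℝ) l, ∃ w : X, AdjAdjRel F (T s f) w ∧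
              HasDerivWithinAt (fun r => T r f) w (Set.Ico (0 : ℝ) l) s))) := by
  
  obtain ⟨M, hM, a, hMF⟩ := hF
  constructor
  · -- existence of the weak limits on the closed span, for real times
    intro g hg s hs
    set S : Set ℝ := {x | ∃ q : ℚ, 0 ≤ (q : ℝ) ∧ (q : ℝ) < l ∧ x = (q : ℝ) * t} with hSdef
    have hc : 0 < l * t := mul_pos hl ht
    have hS : ∀ σ ∈ Set.Ico (0:ℝ) (l * t), ∀ η : ℝ, 0 < η →
        ∃ σ' ∈ S, σ' ∈ Set.Ico (0:ℝ) (l * t) ∧ |σ - σ'| ≤ η := by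
      intro σ hσ η hη
      rcases eq_or_lt_of_le hσ.1 with h0 | h0
      · refine ⟨0, ⟨0, by simp, by simpa using hl, by simp⟩, ⟨le_refl 0, hc⟩, ?_⟩
        rw [← h0]
        simpa using hη.le
      · have hσt : 0 < σ / t := div_pos h0 ht
        have hσtl : σ / t < l := by
          rw [div_lt_iff₀ ht]
          have := hσ.2
          linarith
        have hlt : max (σ / t - η / t) 0 < σ / t := by
          apply max_lt _ hσt
          have : (0:ℝ) < η / t := by positivity
          linarith
        obtain ⟨q, hq1, hq2⟩ := exists_rat_btwn hlt
        have hq0 : 0 ≤ (q:ℝ) := le_of_lt (lt_of_le_of_lt (le_max_right _ 0) hq1)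
        have hql : (q:ℝ) < l := lt_trans hq2 hσtl
        have hqtσ : (q:ℝ) * t < σ := by
          have h1 := mul_lt_mul_of_pos_right hq2 ht
          have h2 : (σ / t) * t = σ := by field_simp
          linarith
        refine ⟨(q:ℝ) * t, ⟨q, hq0, hql, rfl⟩, ⟨by positivity, ?_⟩, ?_⟩
        · have := mul_lt_mul_of_pos_right hql ht
          linarith [hσ.2]
        · have h3 : σ / t - η / t < (q:ℝ) := lt_of_le_of_lt (le_max_left _ _) hq1
          have h4 := mul_lt_mul_of_pos_right h3 ht
          have h5 : (σ / t - η / t) * t = σ - η := by field_simp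
          rw [abs_of_nonneg (by linarith)]
          linarith
    have hΦ' : ∀ g' ∈ Φ, ∀ σ' ∈ S, σ' ∈ Set.Ico (0:ℝ) (l * t) →
        ∃ Lm : X, ∀ φ : StrongDual ℝ X,
          Tendsto (fun k => φ ((chA F t gk σ' k) g')) atTop (𝓝 (φ Lm)) := by
      rintro g' hg' σ' ⟨q, hq0, hql, rfl⟩ _
      obtain ⟨L, hL⟩ := hlim g' hg' q hq0 hql
      refine ⟨L, fun φ => (hL φ).congr fun k => ?_⟩
      have h1 : (gk k : ℝ) * ((q:ℝ) * t) / t = (gk k : ℝ) * (q:ℝ) := by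
        field_simp
      simp only [chA, h1]
    obtain ⟨L, hL⟩ := ch_exists hMF hM ht hgk hc hS hΦ' g hg (s * t)
      ⟨mul_nonneg hs.1 ht.le, mul_lt_mul_of_pos_right hs.2 ht⟩
    refine ⟨L, fun φ => (hL φ).congr fun k => ?_⟩
    have h1 : (gk k : ℝ) * (s * t) / t = (gk k : ℝ) * s := by
      field_simp
    simp only [chA, h1]
  · -- properties of T
    intro T hT
    have hT' : ∀ s ∈ Set.Ico (0:ℝ) l, ∀ g ∈ closedSpan Φ, ∀ φ : StrongDual ℝ X,
        Tendsto (fun k => φ ((chA F t gk s k) g)) atTop (𝓝 (φ (T s g))) := by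
      intro s hs g hg φ
      refine (hT s hs g hg φ).congr fun k => ?_
      simp only [chA, mul_div_assoc]
    have hadd : ∀ s ∈ Set.Ico (0:ℝ) l, ∀ g₁ ∈ closedSpan Φ, ∀ g₂ ∈ closedSpan Φ,
        T s (g₁ + g₂) = T s g₁ + T s g₂ := by
      intro s hs g₁ h₁ g₂ h₂
      refine (NormedSpace.eq_iff_forall_dual_eq ℝ).2 fun χ => ?_
      have h1 := hT' s hs (g₁ + g₂) (Submodule.add_mem _ h₁ h₂) χ
      have h2 : Tendsto (fun k => χ ((chA F t gk s k) (g₁ + g₂))) atTop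
          (𝓝 (χ (T s g₁) + χ (T s g₂))) := by
        have h3 := (hT' s hs g₁ h₁ χ).add (hT' s hs g₂ h₂ χ)
        refine h3.congr fun k => ?_
        rw [map_add, map_add]
      rw [tendsto_nhds_unique h1 h2, map_add]
    have hsmul : ∀ s ∈ Set.Ico (0:ℝ) l, ∀ (c : ℝ), ∀ g ∈ closedSpan Φ,
        T s (c • g) = c • T s g := by
      intro s hs c g hg
      refine (NormedSpace.eq_iff_forall_dual_eq ℝ).2 fun χ => ?_
      have h1 := hT' s hs (c • g) (Submodule.smul_mem _ c hg) χ
      have h2 : Tendsto (fun k => χ ((chA F t gk s k) (c • g))) atTop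
          (𝓝 (c * χ (T s g))) := by
        have h3 := (hT' s hs g hg χ).const_mul c
        refine h3.congr fun k => ?_
        rw [_root_.map_smul, _root_.map_smul, smul_eq_mul]
      rw [tendsto_nhds_unique h1 h2, _root_.map_smul, smul_eq_mul]
    have hbnd : ∀ s ∈ Set.Ico (0:ℝ) l, ∀ g ∈ closedSpan Φ,
        ‖T s g‖ ≤ M * Real.exp (max a 0 * s) * ‖g‖ := by
      intro s hs g hg
      refine ch_weak_norm (hT' s hs g hg) (Eventually.of_forall fun k => ?_)
      calc ‖(chA F t gk s k) g‖ ≤ ‖chA F t gk s k‖ * ‖g‖ := (chA F t gk s k).le_opNorm g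
        _ ≤ M * Real.exp (max a 0 * s) * ‖g‖ :=
            mul_le_mul_of_nonneg_right (chA_norm hMF hM ht hs.1 (le_refl s) k)
              (norm_nonneg g)
    have hTdiff : ∀ g ∈ closedSpan Φ, ∀ ε : ℝ, 0 < ε → ∃ C : ℝ, 1 ≤ C ∧
        ∀ r ∈ Set.Ico (0:ℝ) l, ∀ s ∈ Set.Ico (0:ℝ) l,
          ‖T r g - T s g‖ ≤ ε + C * |r - s| := by
      intro g hg ε hε
      obtain ⟨C, hC1, K, hK⟩ := ch_unif hMF hM ht hgk hl.le g hε
      refine ⟨C, hC1, fun r hr s hs => ?_⟩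
      refine ch_weak_norm' (u := fun k => chA F t gk r k g - chA F t gk s k g)
        (L := T r g - T s g) (fun χ => ?_) (fun θ hθ => ?_)
      · have h3 := (hT' r hr g hg χ).sub (hT' s hs g hg χ)
        simpa [map_sub] using h3
      · have hsm := ch_hsmall ht hgk (show (0:ℝ) < θ / C by positivity)
        filter_upwards [eventually_ge_atTop K, hsm] with k hk1 hk2
        obtain ⟨hpos, hb⟩ := hK k hk1
        have h1 := hb r s ⟨hr.1, hr.2.le⟩ ⟨hs.1, hs.2.le⟩
        have hCθ : C * (t / (gk k : ℝ)) ≤ θ := by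
          rw [← le_div_iff₀' (by linarith)]
          exact hk2
        nlinarith [abs_nonneg (r - s), le_trans zero_le_one hC1]
    have hcont : ∀ g ∈ closedSpan Φ, ContinuousOn (fun s => T s g) (Set.Ico (0:ℝ) l) := by
      intro g hg s hs
      refine Metric.continuousWithinAt_iff.2 fun ε hε => ?_
      obtain ⟨C, hC1, hC⟩ := hTdiff g hg (ε/2) (by positivity)
      have hC0 : (0:ℝ) < C := lt_of_lt_of_le one_pos hC1
      refine ⟨ε/(4*C), by positivity, fun r hr hdist => ?_⟩
      rw [dist_eq_norm]
      have h1 := hC r hr s hs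
      rw [Real.dist_eq] at hdist
      have h2 : C * |r - s| ≤ C * (ε/(4*C)) := mul_le_mul_of_nonneg_left hdist.le hC0.le
      have h3 : C * (ε/(4*C)) = ε/4 := by field_simp
      calc ‖T r g - T s g‖ ≤ ε/2 + C*|r-s| := h1
        _ ≤ ε/2 + ε/4 := by linarith
        _ < ε := by linarith
    have hc' : ∀ f ∈ closedSpan Φ, ∀ y : X, DerivAtZero F f y → y ∈ closedSpan Φ →
        ∀ s ∈ Set.Ico (0 : ℝ) l,
          HasDerivWithinAt (fun r => T r f) (T s y) (Set.Ico (0:ℝ) l) s := by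
      intro f hfΦ y hfd hyΦ s hs
      have hu : ContinuousOn (fun σ => T σ y) (Set.Ico (0:ℝ) l) := hcont y hyΦ
      have hvec : ∀ r ∈ Set.Ico (0:ℝ) l, T r f = T 0 f + ∫ σ in (0:ℝ)..r, T σ y := by
        intro r hr
        have hint : IntervalIntegrable (fun σ => T σ y) volume 0 r := by
          apply ContinuousOn.intervalIntegrable
          rw [Set.uIcc_of_le hr.1]
          exact hu.mono fun x hx => ⟨hx.1, lt_of_le_of_lt hx.2 hr.2⟩
        refine (NormedSpace.eq_iff_forall_dual_eq ℝ).2 fun χ => ?_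
        have hscal : χ (T r f) - χ (T 0 f) = ∫ σ in (0:ℝ)..r, χ (T σ y) :=
          ch_scalar_c hMF hM ht hgk hfd χ (fun σ => χ (T σ f)) (fun σ => χ (T σ y))
            (fun σ hσ => hT' σ hσ f hfΦ χ) (fun σ hσ => hT' σ hσ y hyΦ χ)
            (le_refl 0) hr.1 hr.2
        have hcomm := χ.intervalIntegral_comp_comm hint
        rw [map_add, ← hcomm]
        linarith
      have hftc := ch_ftc hu (T 0 f) hs
      exact hftc.congr (fun r hr => hvec r hr) (hvec s hs)
    have hd' : ∀ φ ψ : StrongDual ℝ X, AdjDerivAtZero F φ ψ →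
        ∀ m ∈ Set.Ico (0:ℝ) l, ∀ p ∈ Set.Ico (0:ℝ) l, ∀ f ∈ closedSpan Φ,
          φ (T m f) - φ (T p f) = ∫ s in p..m, ψ (T s f) := by
      intro φ ψ hadj m hm p hp f hfΦ
      rcases le_total p m with h | h
      · exact ch_scalar_d hMF hM ht hgk hadj (fun σ => φ (T σ f)) (fun σ => ψ (T σ f))
          (fun σ hσ => hT' σ hσ f hfΦ φ) (fun σ hσ => hT' σ hσ f hfΦ ψ) hp.1 h hm.2
      · have h2 : φ (T p f) - φ (T m f) = ∫ s in m..p, ψ (T s f) :=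
          ch_scalar_d hMF hM ht hgk hadj (fun σ => φ (T σ f)) (fun σ => ψ (T σ f))
            (fun σ hσ => hT' σ hσ f hfΦ φ) (fun σ hσ => hT' σ hσ f hfΦ ψ) hm.1 h hp.2
        rw [intervalIntegral.integral_symm]
        linarith
    have he' : ∀ φ ψ : StrongDual ℝ X, AdjDerivAtZero F φ ψ →
        ∀ f ∈ closedSpan Φ, ∀ s ∈ Set.Ico (0:ℝ) l,
          HasDerivWithinAt (fun r => φ (T r f)) (ψ (T s f)) (Set.Ico (0:ℝ) l) s := by
      intro φ ψ hadj f hfΦ s hs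
      have hv : ContinuousOn (fun σ => ψ (T σ f)) (Set.Ico (0:ℝ) l) :=
        ψ.continuous.comp_continuousOn (hcont f hfΦ)
      have hvec : ∀ r ∈ Set.Ico (0:ℝ) l,
          φ (T r f) = φ (T 0 f) + ∫ σ in (0:ℝ)..r, ψ (T σ f) := by
        intro r hr
        have h1 := hd' φ ψ hadj r hr 0 ⟨le_refl 0, hl⟩ f hfΦ
        linarith
      have hftc := ch_ftc hv (φ (T 0 f)) hs
      exact hftc.congr (fun r hr => hvec r hr) (hvec s hs)
    refine ⟨⟨hadd, hsmul, ⟨M, hM, max a 0, hbnd⟩⟩, hcont, hc', hd', he', ?_⟩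
    intro hdense f hfΦ y hfd hyΦ
    refine ⟨ch_adjadj hMF, fun s hs => ?_⟩
    refine ⟨T s y, ?_, hc' f hfΦ y hfd hyΦ s hs⟩
    intro φ ψ hadj
    have h1 := he' φ ψ hadj f hfΦ s hs
    have h2 := hc' f hfΦ y hfd hyΦ s hs
    have h3 : HasDerivWithinAt (fun r => φ (T r f)) (φ (T s y)) (Set.Ico (0:ℝ) l) s :=
      φ.hasFDerivAt.comp_hasDerivWithinAt s h2
    have huniq : UniqueDiffWithinAt ℝ (Set.Ico (0:ℝ) l) s := (uniqueDiffOn_Ico 0 l) s hs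
    exact (h1.derivWithin huniq).symm.trans (h3.derivWithin huniq)
end
end
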